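/- arXiv:2209.08050 — 5 statements merged into one kernel-verified Lean document; each statement's English description precedes it below -/
import Mathlib

section
/- Let n ≥ 2 and 1 ≤ i < j ≤ n. Then Cov[ln(U_(i)), ln(U_(j))] = ψ₁(j) − ψ₁(n+1) and Cov[ln(1−U_(i)), ln(1−U_(j))] = ψ₁(n+1−i) − ψ₁(n+1); here E[ln(U_(i)) ln(U_(j))] is the integral of (ln u)(ln v) against the joint density c_{i,j,n} u^{i−1}(v−u)^{j−i−1}(1−v)^{n−j} over the region 0 < u < v < 1, and Cov[X,Y] = E[XY] − E[X]E[Y]. -/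
open MeasureTheory intervalIntegral

/-- The digamma function `ψ`, the derivative of `log Γ` on `(0, ∞)`. -/
noncomputable def digamma (x : ℝ) : ℝ := deriv (fun y => Real.log (Real.Gamma y)) x

/-- The trigamma function `ψ₁`, the derivative of the digamma function. -/
noncomputable def trigamma (x : ℝ) : ℝ := deriv digamma x

open MeasureTheory intervalIntegral Real Set Filter Topology

open Real Filter Topology Set in
lemma analyticAt_logGamma {x : ℝ} (hx : 0 < x) :
    AnalyticAt ℝ (fun y => Real.log (Real.Gamma y)) x := by
  have hGc : AnalyticAt ℂ Complex.Gamma (x : ℂ) := by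
    apply DifferentiableOn.analyticAt (s := {z : ℂ | 0 < z.re})
    · intro z hz
      exact (Complex.differentiableAt_Gamma z (fun m => by
        intro h; rw [h] at hz; simp at hz; nlinarith [hz, (Nat.cast_nonneg m : (0:ℝ) ≤ m)]
        )).differentiableWithinAt
    · exact (isOpen_lt continuous_const Complex.continuous_re).mem_nhds (by simpa using hx)
  have hlog : AnalyticAt ℂ (fun z => Complex.log (Complex.Gamma z)) (x : ℂ) := by
    apply hGc.clog
    rw [Complex.Gamma_ofReal]
    exact Complex.mem_slitPlane_iff.2 (Or.inl (by simpa using Real.Gamma_pos_of_pos hx))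
  have hcomp : AnalyticAt ℝ
      (fun y : ℝ => (Complex.log (Complex.Gamma (y : ℂ))).re) x := by
    have h1 : AnalyticAt ℝ (fun z => Complex.log (Complex.Gamma z)) (x : ℂ) :=
      hlog.restrictScalars
    have h2 : AnalyticAt ℝ (fun y : ℝ => (y : ℂ)) x := Complex.ofRealCLM.analyticAt x
    have h3 := h1.comp h2
    exact (Complex.reCLM.analyticAt _).comp h3
  apply hcomp.congr
  have hev : ∀ᶠ y in 𝓝 x, 0 < y := eventually_gt_nhds hx
  filter_upwards [hev] with y hy
  have h := Real.Gamma_pos_of_pos hy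
  rw [Complex.Gamma_ofReal, ← Complex.ofReal_log h.le, Complex.ofReal_re]


open Real Filter Topology Set in
lemma analyticAt_digamma {x : ℝ} (hx : 0 < x) : AnalyticAt ℝ digamma x := by
  obtain ⟨v, hvx, hv⟩ := (analyticAt_logGamma hx).exists_mem_nhds_analyticOnNhd
  exact hv.deriv x (mem_of_mem_nhds hvx)

open Real Filter Topology Set in
lemma digamma_add_one {x : ℝ} (hx : 0 < x) : digamma (x + 1) = digamma x + 1 / x := by
  have hder : ∀ {y : ℝ}, 0 < y → DifferentiableAt ℝ (fun t => Real.log (Real.Gamma t)) y :=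
    fun {y} hy => ((Real.differentiableAt_Gamma (fun m =>
        (((neg_nonpos.mpr (Nat.cast_nonneg m)).trans_lt hy).ne'))).log
      (Real.Gamma_ne_zero (fun m =>
        (((neg_nonpos.mpr (Nat.cast_nonneg m)).trans_lt hy).ne'))))
  have h : digamma (x + 1) = deriv (fun y => Real.log (Real.Gamma (y + 1))) x := by
    rw [digamma, ← deriv_comp_add_const (fun y => Real.log (Real.Gamma y)) 1]
  rw [h]
  have : deriv (fun y => Real.log (Real.Gamma (y + 1))) x
      = deriv (fun y => Real.log (Real.Gamma y) + Real.log y) x := by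
    apply Filter.EventuallyEq.deriv_eq
    filter_upwards [eventually_gt_nhds hx] with y hy
    rw [Real.Gamma_add_one hy.ne', Real.log_mul hy.ne' (Real.Gamma_pos_of_pos hy).ne', add_comm]
  rw [this, deriv_fun_add (hder hx) (Real.differentiableAt_log hx.ne'), Real.deriv_log, digamma,
    one_div]

open Real Filter Topology Set in
lemma trigamma_add_one {x : ℝ} (hx : 0 < x) : trigamma (x + 1) = trigamma x - 1 / x ^ 2 := by
  have h : trigamma (x + 1) = deriv (fun y => digamma (y + 1)) x := by
    rw [trigamma, ← deriv_comp_add_const digamma 1]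
  rw [h]
  have : deriv (fun y => digamma (y + 1)) x = deriv (fun y => digamma y + y⁻¹) x := by
    apply Filter.EventuallyEq.deriv_eq
    filter_upwards [eventually_gt_nhds hx] with y hy
    rw [digamma_add_one hy, one_div]
  rw [this, deriv_fun_add (analyticAt_digamma hx).differentiableAt (differentiableAt_inv hx.ne'),
    deriv_inv, trigamma]
  rw [one_div]
  ring


lemma abs_log_le {x : ℝ} (hx : 0 < x) (hx1 : x ≤ 1) : |Real.log x| ≤ 4 * x ^ (-(1/4) : ℝ) := by
  rw [abs_of_nonpos (Real.log_nonpos hx.le hx1), ← Real.log_inv]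
  have h := Real.log_le_rpow_div (x := x⁻¹) (by positivity) (by norm_num : (0:ℝ) < 1/4)
  have h2 : (x⁻¹) ^ ((1:ℝ)/4) = x ^ (-(1/4) : ℝ) := by
    rw [← Real.rpow_neg_one x, ← Real.rpow_mul hx.le]; norm_num
  calc Real.log x⁻¹ ≤ (x⁻¹) ^ ((1:ℝ)/4) / (1/4) := h
    _ = 4 * x ^ (-(1/4) : ℝ) := by rw [h2]; ring

lemma logpow_bound {c : ℕ} (hc : c ≤ 2) {x : ℝ} (hx : 0 < x) (hx1 : x ≤ 1) :
    |Real.log x| ^ c ≤ 16 * x ^ (-(1/2) : ℝ) := by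
  set r := x ^ (-(1/4) : ℝ) with hr
  have hr1 : 1 ≤ r := Real.one_le_rpow_of_pos_of_le_one_of_nonpos hx hx1 (by norm_num)
  have hsq : x ^ (-(1/2) : ℝ) = r ^ 2 := by
    rw [hr, ← Real.rpow_natCast (x ^ (-(1/4):ℝ)) 2, ← Real.rpow_mul hx.le]; norm_num
  have hb : |Real.log x| ^ c ≤ (4 * r) ^ c :=
    pow_le_pow_left₀ (abs_nonneg _) (abs_log_le hx hx1) c
  refine hb.trans ?_
  rw [hsq]
  interval_cases c <;> nlinarith [hr1]

lemma intInt_logpow (c p q : ℕ) (hc : c ≤ 2) :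
    IntervalIntegrable (fun t => Real.log t ^ c * (t ^ p * (1-t) ^ q)) volume 0 1 := by
  have hmeas : AEStronglyMeasurable (fun t => Real.log t ^ c * (t ^ p * (1-t) ^ q))
      (volume.restrict (Ioc (0:ℝ) 1)) := by
    refine ((Real.measurable_log.pow_const c).mul ?_).aestronglyMeasurable
    exact (measurable_id.pow_const p).mul ((measurable_const.sub measurable_id).pow_const q)
  have hg : IntervalIntegrable (fun t : ℝ => 16 * t ^ (-(1/2) : ℝ)) volume 0 1 :=
    (intervalIntegrable_rpow' (by norm_num)).const_mul 16
  rw [intervalIntegrable_iff_integrableOn_Ioc_of_le (by norm_num : (0:ℝ) ≤ 1)] at hg ⊢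
  refine Integrable.mono hg hmeas ?_
  rw [ae_restrict_iff' measurableSet_Ioc]
  refine Filter.Eventually.of_forall (fun x hx => ?_)
  obtain ⟨hx0, hx1⟩ := hx
  have h1 : ‖Real.log x ^ c * (x ^ p * (1-x) ^ q)‖ ≤ |Real.log x| ^ c := by
    rw [norm_mul, norm_pow]
    have : ‖x ^ p * (1-x) ^ q‖ ≤ 1 := by
      rw [norm_mul, norm_pow, norm_pow]
      have h2 : ‖x‖ ≤ 1 := by rw [Real.norm_eq_abs, abs_of_pos hx0]; exact hx1
      have h3 : ‖1 - x‖ ≤ 1 := by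
        rw [Real.norm_eq_abs, abs_of_nonneg (by linarith)]; linarith
      calc ‖x‖ ^ p * ‖1-x‖ ^ q ≤ 1 * 1 :=
            mul_le_mul (pow_le_one₀ (norm_nonneg _) h2) (pow_le_one₀ (norm_nonneg _) h3)
              (by positivity) zero_le_one
        _ = 1 := by norm_num
    calc ‖Real.log x‖ ^ c * ‖x ^ p * (1-x) ^ q‖ ≤ ‖Real.log x‖ ^ c * 1 :=
          mul_le_mul_of_nonneg_left this (by positivity)
      _ = |Real.log x| ^ c := by rw [mul_one, Real.norm_eq_abs]
  refine h1.trans ?_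
  have h16 : (0:ℝ) ≤ 16 * x ^ (-(1/2) : ℝ) := by positivity
  rw [Real.norm_eq_abs, abs_of_nonneg h16]
  exact logpow_bound hc hx0 hx1

lemma tendsto_pow_log (m : ℕ) :
    Tendsto (fun t : ℝ => t ^ (m+1) * Real.log t) (𝓝[>] (0:ℝ)) (𝓝 0) := by
  have h := tendsto_log_mul_rpow_nhdsGT_zero (r := (m+1 : ℝ)) (by positivity)
  refine h.congr' ?_
  filter_upwards [self_mem_nhdsWithin] with t (ht : 0 < t)
  rw [← Real.rpow_natCast t (m+1)]
  push_cast
  ring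

lemma tendsto_pow_log_sq (m : ℕ) :
    Tendsto (fun t : ℝ => t ^ (m+1) * Real.log t ^ 2) (𝓝[>] (0:ℝ)) (𝓝 0) := by
  have h := tendsto_log_mul_rpow_nhdsGT_zero (r := ((m:ℝ)+1)/2) (by positivity)
  have h2 := h.mul h
  rw [mul_zero] at h2
  refine h2.congr' ?_
  filter_upwards [self_mem_nhdsWithin] with t (ht : 0 < t)
  have hh : t ^ (((m:ℝ)+1)/2) * t ^ (((m:ℝ)+1)/2) = t ^ (m+1) := by
    rw [← Real.rpow_add ht, ← Real.rpow_natCast t (m+1)]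
    push_cast; ring_nf
  calc Real.log t * t ^ (((m:ℝ)+1)/2) * (Real.log t * t ^ (((m:ℝ)+1)/2))
      = (t ^ (((m:ℝ)+1)/2) * t ^ (((m:ℝ)+1)/2)) * Real.log t ^ 2 := by ring
    _ = t ^ (m+1) * Real.log t ^ 2 := by rw [hh]

lemma contOn_aux {f : ℝ → ℝ} (h0 : f 0 = 0) (hl : Tendsto f (𝓝[>] (0:ℝ)) (𝓝 0))
    (hc : ∀ x : ℝ, x ≠ 0 → ContinuousAt f x) : ContinuousOn f (Icc 0 1) := by
  intro t ht
  rcases eq_or_ne t 0 with rfl | hne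
  · have key : ContinuousWithinAt f (insert 0 (Ioi 0)) 0 := by
      show Tendsto f (𝓝[insert (0:ℝ) (Ioi 0)] 0) (𝓝 (f 0))
      rw [h0, nhdsWithin_insert]
      refine tendsto_sup.2 ⟨?_, hl⟩
      simpa [h0] using tendsto_pure_nhds f 0
    refine key.mono ?_
    intro y hy
    rcases eq_or_ne y 0 with rfl | hy0
    · exact mem_insert _ _
    · exact mem_insert_of_mem _ (lt_of_le_of_ne hy.1 (Ne.symm hy0))
  · exact (hc t hne).continuousWithinAt

lemma continuousOn_pow_mul_log (m : ℕ) :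
    ContinuousOn (fun t : ℝ => t ^ (m+1) * Real.log t) (Icc 0 1) :=
  contOn_aux (by simp) (tendsto_pow_log m)
    (fun x hx => (continuousAt_pow _ _).mul (Real.continuousAt_log hx))

lemma continuousOn_pow_mul_log_sq (m : ℕ) :
    ContinuousOn (fun t : ℝ => t ^ (m+1) * Real.log t ^ 2) (Icc 0 1) :=
  contOn_aux (by simp) (tendsto_pow_log_sq m)
    (fun x hx => (continuousAt_pow _ _).mul ((Real.continuousAt_log hx).pow 2))

lemma integral_pow_mul_log (m : ℕ) :
    ∫ t in (0:ℝ)..1, Real.log t * t ^ m = -(1/((m:ℝ)+1)^2) := by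
  set F : ℝ → ℝ := fun t => (t^(m+1) * Real.log t)/((m:ℝ)+1) - t^(m+1)/((m:ℝ)+1)^2 with hF
  have hm1 : ((m:ℝ)+1) ≠ 0 := by positivity
  have hcont : ContinuousOn F (Icc 0 1) :=
    ((continuousOn_pow_mul_log m).div_const _).sub ((continuousOn_pow (m+1)).div_const _)
  have hderiv : ∀ x ∈ Ioo (0:ℝ) 1, HasDerivAt F (Real.log x * x ^ m) x := by
    intro x hx
    have h1 : HasDerivAt (fun t : ℝ => t^(m+1)) (((m:ℝ)+1)*x^m) x := by
      simpa using hasDerivAt_pow (m+1) x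
    have h2 : HasDerivAt Real.log x⁻¹ x := Real.hasDerivAt_log hx.1.ne'
    have h5 := ((h1.fun_mul h2).div_const ((m:ℝ)+1)).sub (h1.div_const (((m:ℝ)+1)^2))
    refine h5.congr_deriv ?_
    have hxne : x ≠ 0 := hx.1.ne'
    field_simp
    ring
  have hint : IntervalIntegrable (fun t : ℝ => Real.log t * t ^ m) volume 0 1 := by
    have := intInt_logpow 1 m 0 (by norm_num)
    simpa using this
  have := intervalIntegral.integral_eq_sub_of_hasDerivAt_of_le (by norm_num : (0:ℝ) ≤ 1)
    hcont hderiv hint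
  rw [this, hF]
  norm_num

lemma integral_pow_mul_log_sq (m : ℕ) :
    ∫ t in (0:ℝ)..1, Real.log t ^ 2 * t ^ m = 2/((m:ℝ)+1)^3 := by
  set F : ℝ → ℝ := fun t => (t^(m+1) * Real.log t ^ 2)/((m:ℝ)+1)
    - (t^(m+1) * Real.log t) * (2/((m:ℝ)+1)^2) + t^(m+1) * (2/((m:ℝ)+1)^3) with hF
  have hm1 : ((m:ℝ)+1) ≠ 0 := by positivity
  have hcont : ContinuousOn F (Icc 0 1) := by
    refine ContinuousOn.add (ContinuousOn.sub ?_ ?_) ?_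
    · exact (continuousOn_pow_mul_log_sq m).div_const _
    · exact (continuousOn_pow_mul_log m).mul continuousOn_const
    · exact (continuousOn_pow (m+1)).mul continuousOn_const
  have hderiv : ∀ x ∈ Ioo (0:ℝ) 1, HasDerivAt F (Real.log x ^ 2 * x ^ m) x := by
    intro x hx
    have h1 : HasDerivAt (fun t : ℝ => t^(m+1)) (((m:ℝ)+1)*x^m) x := by
      simpa using hasDerivAt_pow (m+1) x
    have h2 : HasDerivAt Real.log x⁻¹ x := Real.hasDerivAt_log hx.1.ne'
    have h2sq : HasDerivAt (fun t => Real.log t ^ 2) (2 * Real.log x * x⁻¹) x := by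
      have := h2.fun_pow 2
      simpa [mul_comm, mul_assoc] using this
    have h6 := (((h1.fun_mul h2sq).div_const ((m:ℝ)+1)).sub
      ((h1.fun_mul h2).mul_const (2/((m:ℝ)+1)^2))).add (h1.mul_const (2/((m:ℝ)+1)^3))
    refine h6.congr_deriv ?_
    have hxne : x ≠ 0 := hx.1.ne'
    field_simp
    ring
  have hint : IntervalIntegrable (fun t : ℝ => Real.log t ^ 2 * t ^ m) volume 0 1 := by
    have := intInt_logpow 2 m 0 (by norm_num)
    simpa using this
  have := intervalIntegral.integral_eq_sub_of_hasDerivAt_of_le (by norm_num : (0:ℝ) ≤ 1)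
    hcont hderiv hint
  rw [this, hF]
  norm_num

noncomputable def Bc (p q : ℕ) : ℝ := (p.factorial * q.factorial : ℝ) / (p+q+1).factorial

noncomputable def hsum (a b : ℕ) : ℝ := ∑ k ∈ Finset.Ico a b, (1:ℝ)/k

noncomputable def hsum2 (a b : ℕ) : ℝ := ∑ k ∈ Finset.Ico a b, (1:ℝ)/(k:ℝ)^2

lemma Bc_zero (p : ℕ) : Bc p 0 = 1/((p:ℝ)+1) := by
  rw [Bc]
  have : (p + 0 + 1).factorial = (p+1) * p.factorial := by
    simp [Nat.factorial_succ]
  rw [this]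
  push_cast
  have h1 : (p.factorial : ℝ) ≠ 0 := by exact_mod_cast Nat.factorial_ne_zero p
  field_simp
  ring

lemma Bc_succ_right (p q : ℕ) : Bc p (q+1) * ((p:ℝ)+q+2) = Bc p q * ((q:ℝ)+1) := by
  rw [Bc, Bc]
  have e1 : p + (q+1) + 1 = (p+q+1)+1 := by omega
  rw [e1, Nat.factorial_succ (p+q+1), Nat.factorial_succ q]
  have h1 : ((p+q+1).factorial : ℝ) ≠ 0 := by exact_mod_cast Nat.factorial_ne_zero _
  have h2 : ((p:ℝ)+q+2) ≠ 0 := by positivity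
  push_cast
  field_simp
  ring

lemma Bc_succ_left (p q : ℕ) : Bc (p+1) q * ((p:ℝ)+q+2) = Bc p q * ((p:ℝ)+1) := by
  rw [Bc, Bc]
  have e1 : (p+1) + q + 1 = (p+q+1)+1 := by omega
  rw [e1, Nat.factorial_succ (p+q+1), Nat.factorial_succ p]
  have h1 : ((p+q+1).factorial : ℝ) ≠ 0 := by exact_mod_cast Nat.factorial_ne_zero _
  have h2 : ((p:ℝ)+q+2) ≠ 0 := by positivity
  push_cast
  field_simp
  ring

lemma Bc_succ_right' (p q : ℕ) : Bc p (q+1) = Bc p q * ((q:ℝ)+1)/((p:ℝ)+q+2) := by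
  have h2 : ((p:ℝ)+q+2) ≠ 0 := by positivity
  rw [eq_div_iff h2]
  exact Bc_succ_right p q

lemma Bc_succ_left' (p q : ℕ) : Bc (p+1) q = Bc p q * ((p:ℝ)+1)/((p:ℝ)+q+2) := by
  have h2 : ((p:ℝ)+q+2) ≠ 0 := by positivity
  rw [eq_div_iff h2]
  exact Bc_succ_left p q

lemma hsum_single (a : ℕ) : hsum a (a+1) = 1/(a:ℝ) := by
  rw [hsum, Nat.Ico_succ_singleton, Finset.sum_singleton]

lemma hsum2_single (a : ℕ) : hsum2 a (a+1) = 1/(a:ℝ)^2 := by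
  rw [hsum2, Nat.Ico_succ_singleton, Finset.sum_singleton]

lemma hsum_top (a b : ℕ) (h : a ≤ b) : hsum a (b+1) = hsum a b + 1/(b:ℝ) :=
  Finset.sum_Ico_succ_top h _

lemma hsum2_top (a b : ℕ) (h : a ≤ b) : hsum2 a (b+1) = hsum2 a b + 1/(b:ℝ)^2 :=
  Finset.sum_Ico_succ_top h _

lemma hsum_bot (a b : ℕ) (h : a < b) : hsum a b = 1/(a:ℝ) + hsum (a+1) b :=
  Finset.sum_eq_sum_Ico_succ_bot h _

lemma hsum2_bot (a b : ℕ) (h : a < b) : hsum2 a b = 1/(a:ℝ)^2 + hsum2 (a+1) b :=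
  Finset.sum_eq_sum_Ico_succ_bot h _

lemma intB : ∀ q p : ℕ, (∫ t in (0:ℝ)..1, t^p * (1-t)^q) = Bc p q := by
  intro q
  induction q with
  | zero =>
    intro p
    rw [Bc_zero]
    simp only [pow_zero, mul_one]
    rw [integral_pow]
    norm_num
  | succ q ih =>
    intro p
    have split : ∀ t : ℝ, t^p*(1-t)^(q+1) = t^p*(1-t)^q - t^(p+1)*(1-t)^q := fun t => by ring
    rw [intervalIntegral.integral_congr (fun t _ => split t)]
    have c1 : Continuous (fun t : ℝ => t^p*(1-t)^q) := by continuity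
    have c2 : Continuous (fun t : ℝ => t^(p+1)*(1-t)^q) := by continuity
    rw [intervalIntegral.integral_sub (c1.intervalIntegrable 0 1) (c2.intervalIntegrable 0 1), ih p, ih (p+1)]
    have h1 := Bc_succ_right p q
    have h2 := Bc_succ_left p q
    have hne : ((p:ℝ)+q+2) ≠ 0 := by positivity
    have key : (Bc p q - Bc (p+1) q - Bc p (q+1)) * ((p:ℝ)+q+2) = 0 := by
      linear_combination -h1 - h2
    rcases mul_eq_zero.mp key with h | h
    · linarith
    · exact absurd h hne

lemma intL : ∀ q p : ℕ, (∫ t in (0:ℝ)..1, Real.log t * (t^p * (1-t)^q))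
    = -(Bc p q * hsum (p+1) (p+q+2)) := by
  intro q
  induction q with
  | zero =>
    intro p
    have e : ∀ t : ℝ, Real.log t * (t^p * (1-t)^0) = Real.log t * t^p := fun t => by ring
    rw [intervalIntegral.integral_congr (fun t _ => e t), integral_pow_mul_log p, Bc_zero]
    have : p + 0 + 2 = (p+1) + 1 := by omega
    rw [this, hsum_single]
    push_cast
    have hne : ((p:ℝ)+1) ≠ 0 := by positivity
    field_simp
  | succ q ih =>
    intro p
    have split : ∀ t : ℝ, Real.log t * (t^p*(1-t)^(q+1))
        = Real.log t * (t^p*(1-t)^q) - Real.log t * (t^(p+1)*(1-t)^q) := fun t => by ring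
    rw [intervalIntegral.integral_congr (fun t _ => split t)]
    have c1 : IntervalIntegrable (fun t : ℝ => Real.log t * (t^p*(1-t)^q)) volume 0 1 := by
      have := intInt_logpow 1 p q (by norm_num); simpa using this
    have c2 : IntervalIntegrable (fun t : ℝ => Real.log t * (t^(p+1)*(1-t)^q)) volume 0 1 := by
      have := intInt_logpow 1 (p+1) q (by norm_num); simpa using this
    rw [intervalIntegral.integral_sub c1 c2, ih p, ih (p+1)]
    have e1 : p + (q+1) + 2 = (p+q+2) + 1 := by omega
    have e2 : (p+1) + q + 2 = (p+q+2) + 1 := by omega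
    rw [e1, e2]
    have ht := hsum_top (p+1) (p+q+2) (by omega)
    have hb := hsum_bot (p+1) ((p+q+2)+1) (by omega)
    have eb : hsum ((p+1)+1) ((p+q+2)+1)
        = hsum (p+1) (p+q+2) + 1/((p+q+2 : ℕ):ℝ) - 1/(((p+1) : ℕ):ℝ) := by
      rw [hb] at ht; linarith [ht]
    rw [eb, ht, Bc_succ_right' p q, Bc_succ_left' p q]
    have hne : ((p:ℝ)+q+2) ≠ 0 := by positivity
    have hne2 : ((p:ℝ)+1) ≠ 0 := by positivity
    push_cast
    field_simp
    ring

lemma intQ : ∀ q p : ℕ, (∫ t in (0:ℝ)..1, Real.log t ^ 2 * (t^p * (1-t)^q))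
    = Bc p q * ((hsum (p+1) (p+q+2))^2 + hsum2 (p+1) (p+q+2)) := by
  intro q
  induction q with
  | zero =>
    intro p
    have e : ∀ t : ℝ, Real.log t ^ 2 * (t^p * (1-t)^0) = Real.log t ^ 2 * t^p := fun t => by ring
    rw [intervalIntegral.integral_congr (fun t _ => e t), integral_pow_mul_log_sq p, Bc_zero]
    have : p + 0 + 2 = (p+1) + 1 := by omega
    rw [this, hsum_single, hsum2_single]
    push_cast
    have hne : ((p:ℝ)+1) ≠ 0 := by positivity
    field_simp
    ring
  | succ q ih =>
    intro p
    have split : ∀ t : ℝ, Real.log t ^ 2 * (t^p*(1-t)^(q+1))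
        = Real.log t ^ 2 * (t^p*(1-t)^q) - Real.log t ^ 2 * (t^(p+1)*(1-t)^q) := fun t => by ring
    rw [intervalIntegral.integral_congr (fun t _ => split t)]
    have c1 : IntervalIntegrable (fun t : ℝ => Real.log t ^ 2 * (t^p*(1-t)^q)) volume 0 1 :=
      intInt_logpow 2 p q (by norm_num)
    have c2 : IntervalIntegrable (fun t : ℝ => Real.log t ^ 2 * (t^(p+1)*(1-t)^q)) volume 0 1 :=
      intInt_logpow 2 (p+1) q (by norm_num)
    rw [intervalIntegral.integral_sub c1 c2, ih p, ih (p+1)]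
    have e1 : p + (q+1) + 2 = (p+q+2) + 1 := by omega
    have e2 : (p+1) + q + 2 = (p+q+2) + 1 := by omega
    rw [e1, e2]
    have ht := hsum_top (p+1) (p+q+2) (by omega)
    have hb := hsum_bot (p+1) ((p+q+2)+1) (by omega)
    have eb : hsum ((p+1)+1) ((p+q+2)+1)
        = hsum (p+1) (p+q+2) + 1/((p+q+2 : ℕ):ℝ) - 1/(((p+1) : ℕ):ℝ) := by
      rw [hb] at ht; linarith [ht]
    have ht2 := hsum2_top (p+1) (p+q+2) (by omega)
    have hb2 := hsum2_bot (p+1) ((p+q+2)+1) (by omega)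
    have eb2 : hsum2 ((p+1)+1) ((p+q+2)+1)
        = hsum2 (p+1) (p+q+2) + 1/((p+q+2 : ℕ):ℝ)^2 - 1/(((p+1) : ℕ):ℝ)^2 := by
      rw [hb2] at ht2; linarith [ht2]
    rw [eb, eb2, ht, ht2, Bc_succ_right' p q, Bc_succ_left' p q]
    have hne : ((p:ℝ)+q+2) ≠ 0 := by positivity
    have hne2 : ((p:ℝ)+1) ≠ 0 := by positivity
    push_cast
    field_simp
    ring

lemma inner_formula (p b : ℕ) {v : ℝ} (hv0 : 0 < v) :
    ∫ u in (0:ℝ)..v, Real.log u * (u^p * (v-u)^b)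
      = v^(p+b+1) * (Real.log v * Bc p b - Bc p b * hsum (p+1) (p+b+2)) := by
  have hvne : v ≠ 0 := hv0.ne'
  have hcomp := intervalIntegral.integral_comp_mul_left
    (f := fun u => Real.log u * (u^p * (v-u)^b)) (a := 0) (b := 1) (c := v) hvne
  rw [mul_zero, mul_one] at hcomp
  have key : (∫ w in (0:ℝ)..1, Real.log (v*w) * ((v*w)^p * (v-v*w)^b))
      = (Real.log v * v^(p+b)) * Bc p b
        + v^(p+b) * (-(Bc p b * hsum (p+1) (p+b+2))) := by
    have congr1 : (∫ w in (0:ℝ)..1, Real.log (v*w) * ((v*w)^p * (v-v*w)^b))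
        = ∫ w in (0:ℝ)..1, ((Real.log v * v^(p+b)) * (w^p*(1-w)^b)
            + v^(p+b) * (Real.log w * (w^p*(1-w)^b))) := by
      rw [intervalIntegral.integral_of_le (by norm_num : (0:ℝ) ≤ 1),
        intervalIntegral.integral_of_le (by norm_num : (0:ℝ) ≤ 1)]
      apply MeasureTheory.setIntegral_congr_fun measurableSet_Ioc
      intro w hw
      have hw0 : 0 < w := hw.1
      dsimp only
      have e1 : Real.log (v*w) = Real.log v + Real.log w := Real.log_mul hvne hw0.ne'
      have e2 : v - v*w = v*(1-w) := by ring
      rw [e1, e2, mul_pow, mul_pow, pow_add]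
      ring
    rw [congr1]
    have i1 : IntervalIntegrable
        (fun w : ℝ => (Real.log v * v^(p+b)) * (w^p*(1-w)^b)) volume 0 1 := by
      apply Continuous.intervalIntegrable
      continuity
    have i2 : IntervalIntegrable
        (fun w : ℝ => v^(p+b) * (Real.log w * (w^p*(1-w)^b))) volume 0 1 := by
      have := intInt_logpow 1 p b (by norm_num)
      simp only [pow_one] at this
      exact this.const_mul _
    rw [intervalIntegral.integral_add i1 i2, intervalIntegral.integral_const_mul,
      intervalIntegral.integral_const_mul, intB b p, intL b p]
  have goal1 : (∫ u in (0:ℝ)..v, Real.log u * (u^p * (v-u)^b))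
      = v * ((Real.log v * v^(p+b)) * Bc p b
          + v^(p+b) * (-(Bc p b * hsum (p+1) (p+b+2)))) := by
    rw [← key, hcomp, smul_eq_mul, ← mul_assoc, mul_inv_cancel₀ hvne, one_mul]
  rw [goal1]
  ring

lemma part1_integral (p b c : ℕ) :
    (∫ v in (0:ℝ)..1, ∫ u in (0:ℝ)..v,
        Real.log u * Real.log v * (u^p * (v-u)^b * (1-v)^c))
      = Bc p b * (Bc (p+b+1) c * ((hsum (p+b+2) (p+b+c+3))^2 + hsum2 (p+b+2) (p+b+c+3)))
        + Bc p b * hsum (p+1) (p+b+2) * (Bc (p+b+1) c * hsum (p+b+2) (p+b+c+3)) := by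
  have step1 : (∫ v in (0:ℝ)..1, ∫ u in (0:ℝ)..v,
        Real.log u * Real.log v * (u^p * (v-u)^b * (1-v)^c))
      = ∫ v in (0:ℝ)..1,
          (Bc p b * (Real.log v ^ 2 * (v^(p+b+1) * (1-v)^c))
            - (Bc p b * hsum (p+1) (p+b+2)) * (Real.log v * (v^(p+b+1) * (1-v)^c))) := by
    rw [intervalIntegral.integral_of_le (by norm_num : (0:ℝ) ≤ 1),
      intervalIntegral.integral_of_le (by norm_num : (0:ℝ) ≤ 1)]
    apply MeasureTheory.setIntegral_congr_fun measurableSet_Ioc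
    intro v hv
    have hv0 : 0 < v := hv.1
    dsimp only
    have eqInner : (∫ u in (0:ℝ)..v,
          Real.log u * Real.log v * (u^p * (v-u)^b * (1-v)^c))
        = (Real.log v * (1-v)^c) * ∫ u in (0:ℝ)..v, Real.log u * (u^p * (v-u)^b) := by
      rw [← intervalIntegral.integral_const_mul]
      apply intervalIntegral.integral_congr
      intro u _
      dsimp only
      ring
    rw [eqInner, inner_formula p b hv0]
    ring
  rw [step1]
  have i1 : IntervalIntegrable
      (fun v : ℝ => Real.log v ^ 2 * (v^(p+b+1) * (1-v)^c)) volume 0 1 :=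
    intInt_logpow 2 (p+b+1) c (by norm_num)
  have i2 : IntervalIntegrable
      (fun v : ℝ => Real.log v * (v^(p+b+1) * (1-v)^c)) volume 0 1 := by
    have := intInt_logpow 1 (p+b+1) c (by norm_num)
    simpa using this
  rw [intervalIntegral.integral_sub (i1.const_mul _) (i2.const_mul _),
    intervalIntegral.integral_const_mul, intervalIntegral.integral_const_mul,
    intQ c (p+b+1), intL c (p+b+1)]
  have e1 : (p+b+1) + 1 = p+b+2 := by omega
  have e2 : (p+b+1) + c + 2 = p+b+c+3 := by omega
  rw [e1, e2]
  ring

lemma triangle_swap (F : ℝ → ℝ → ℝ) (hF : Measurable (Function.uncurry F))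
    (hbd : ∀ u v : ℝ, 0 ≤ u → u ≤ v → v ≤ 1 → |F u v| ≤ |Real.log (1-u)| * |Real.log (1-v)|) :
    (∫ v in (0:ℝ)..1, ∫ u in (0:ℝ)..v, F u v) = ∫ u in (0:ℝ)..1, ∫ v in u..1, F u v := by
  set S : Set (ℝ×ℝ) := {z | 0 ≤ z.1} ∩ ({z | z.1 ≤ z.2} ∩ {z | z.2 ≤ 1}) with hSdef
  have hS : MeasurableSet S := by
    refine MeasurableSet.inter ?_ (MeasurableSet.inter ?_ ?_)
    · exact measurableSet_le measurable_const measurable_fst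
    · exact measurableSet_le measurable_fst measurable_snd
    · exact measurableSet_le measurable_snd measurable_const
  set G : ℝ×ℝ → ℝ := S.indicator (Function.uncurry F) with hGdef
  have hGmeas : Measurable G := hF.indicator hS
  have hmemS : ∀ z : ℝ×ℝ, z ∈ S ↔ (0 ≤ z.1 ∧ z.1 ≤ z.2 ∧ z.2 ≤ 1) := by
    intro z
    simp [hSdef, Set.mem_inter_iff, and_assoc]
  -- integrability of the log indicator on ℝ
  have hbase : IntervalIntegrable (fun u : ℝ => Real.log (1-u)) volume 0 1 := by
    have h0 : IntervalIntegrable Real.log volume 0 1 := by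
      have := intInt_logpow 1 0 0 (by norm_num)
      simpa using this
    have := (h0.comp_sub_left 1).symm
    simpa using this
  have hInt1 : Integrable ((Icc (0:ℝ) 1).indicator (fun u => |Real.log (1-u)|)) volume := by
    apply MeasureTheory.IntegrableOn.integrable_indicator _ measurableSet_Icc
    rw [integrableOn_Icc_iff_integrableOn_Ioc]
    have := hbase.abs
    rwa [intervalIntegrable_iff_integrableOn_Ioc_of_le (by norm_num : (0:ℝ) ≤ 1)] at this
  have hg : Integrable (fun z : ℝ×ℝ =>
      ((Icc (0:ℝ) 1).indicator (fun u => |Real.log (1-u)|) z.1)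
        * ((Icc (0:ℝ) 1).indicator (fun v => |Real.log (1-v)|) z.2))
      (volume.prod volume) := hInt1.mul_prod hInt1
  have hGint : Integrable G (volume.prod volume) := by
    refine hg.mono hGmeas.aestronglyMeasurable ?_
    refine Filter.Eventually.of_forall (fun z => ?_)
    by_cases hz : z ∈ S
    · rw [hGdef, Set.indicator_of_mem hz]
      obtain ⟨h1, h2, h3⟩ := (hmemS z).1 hz
      have hz1 : z.1 ∈ Icc (0:ℝ) 1 := ⟨h1, h2.trans h3⟩
      have hz2 : z.2 ∈ Icc (0:ℝ) 1 := ⟨h1.trans h2, h3⟩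
      rw [Real.norm_eq_abs, Real.norm_eq_abs, Set.indicator_of_mem hz1, Set.indicator_of_mem hz2,
        abs_mul, abs_abs, abs_abs]
      exact hbd z.1 z.2 h1 h2 h3
    · rw [hGdef, Set.indicator_of_notMem hz, norm_zero]
      exact norm_nonneg _
  have hswap := MeasureTheory.integral_integral_swap (μ := volume) (ν := volume)
    (f := fun u v => G (u,v)) hGint
  -- identify the two sides
  have innerA : ∀ v : ℝ, (∫ u : ℝ, G (u,v))
      = (Icc (0:ℝ) 1).indicator (fun w => ∫ u in (0:ℝ)..w, F u w) v := by
    intro v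
    by_cases hv : v ∈ Icc (0:ℝ) 1
    · rw [Set.indicator_of_mem hv]
      have he : (fun u => G (u,v)) = (Icc (0:ℝ) v).indicator (fun u => F u v) := by
        funext u
        by_cases hu : u ∈ Icc (0:ℝ) v
        · rw [Set.indicator_of_mem hu, hGdef,
            Set.indicator_of_mem ((hmemS (u,v)).2 ⟨hu.1, hu.2, hv.2⟩)]
          rfl
        · rw [Set.indicator_of_notMem hu, hGdef, Set.indicator_of_notMem]
          intro hz
          obtain ⟨a1, a2, _⟩ := (hmemS (u,v)).1 hz
          exact hu ⟨a1, a2⟩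
      rw [he, MeasureTheory.integral_indicator measurableSet_Icc,
        MeasureTheory.integral_Icc_eq_integral_Ioc,
        ← intervalIntegral.integral_of_le hv.1]
    · rw [Set.indicator_of_notMem hv]
      have he : (fun u => G (u,v)) = fun _ => (0:ℝ) := by
        funext u
        rw [hGdef, Set.indicator_of_notMem]
        intro hz
        obtain ⟨a1, a2, a3⟩ := (hmemS (u,v)).1 hz
        exact hv ⟨a1.trans a2, a3⟩
      rw [he, MeasureTheory.integral_zero]
  have innerB : ∀ u : ℝ, (∫ v : ℝ, G (u,v))
      = (Icc (0:ℝ) 1).indicator (fun w => ∫ v in w..1, F w v) u := by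
    intro u
    by_cases hu : u ∈ Icc (0:ℝ) 1
    · rw [Set.indicator_of_mem hu]
      have he : (fun v => G (u,v)) = (Icc u 1).indicator (fun v => F u v) := by
        funext v
        by_cases hv : v ∈ Icc u 1
        · rw [Set.indicator_of_mem hv, hGdef,
            Set.indicator_of_mem ((hmemS (u,v)).2 ⟨hu.1, hv.1, hv.2⟩)]
          rfl
        · rw [Set.indicator_of_notMem hv, hGdef, Set.indicator_of_notMem]
          intro hz
          obtain ⟨_, a2, a3⟩ := (hmemS (u,v)).1 hz
          exact hv ⟨a2, a3⟩
      rw [he, MeasureTheory.integral_indicator measurableSet_Icc,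
        MeasureTheory.integral_Icc_eq_integral_Ioc,
        ← intervalIntegral.integral_of_le hu.2]
    · rw [Set.indicator_of_notMem hu]
      have he : (fun v => G (u,v)) = fun _ => (0:ℝ) := by
        funext v
        rw [hGdef, Set.indicator_of_notMem]
        intro hz
        obtain ⟨a1, a2, a3⟩ := (hmemS (u,v)).1 hz
        exact hu ⟨a1, a2.trans a3⟩
      rw [he, MeasureTheory.integral_zero]
  calc (∫ v in (0:ℝ)..1, ∫ u in (0:ℝ)..v, F u v)
      = ∫ v in (0:ℝ)..1,
          (Icc (0:ℝ) 1).indicator (fun w => ∫ u in (0:ℝ)..w, F u w) v := by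
        rw [intervalIntegral.integral_of_le (by norm_num : (0:ℝ) ≤ 1),
          intervalIntegral.integral_of_le (by norm_num : (0:ℝ) ≤ 1)]
        apply MeasureTheory.setIntegral_congr_fun measurableSet_Ioc
        intro v hv
        rw [Set.indicator_of_mem (Set.mem_Icc.mpr ⟨hv.1.le, hv.2⟩)]
    _ = ∫ v : ℝ, (Icc (0:ℝ) 1).indicator (fun w => ∫ u in (0:ℝ)..w, F u w) v := by
        rw [intervalIntegral.integral_of_le (by norm_num : (0:ℝ) ≤ 1),
          ← MeasureTheory.integral_indicator measurableSet_Ioc]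
        congr 1
        funext v
        by_cases hv : v ∈ Ioc (0:ℝ) 1
        · rw [Set.indicator_of_mem hv, Set.indicator_of_mem (Set.mem_Icc.mpr ⟨hv.1.le, hv.2⟩)]
        · rw [Set.indicator_of_notMem hv]
          by_cases hv2 : v ∈ Icc (0:ℝ) 1
          · have hv0 : v = 0 := by
              rcases hv2 with ⟨h1, h2⟩
              by_contra hne
              exact hv ⟨lt_of_le_of_ne h1 (Ne.symm hne), h2⟩
            rw [Set.indicator_of_mem hv2, hv0]
            simp
          · rw [Set.indicator_of_notMem hv2]
    _ = ∫ v : ℝ, ∫ u : ℝ, G (u,v) := by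
        congr 1
        funext v
        rw [innerA v]
    _ = ∫ u : ℝ, ∫ v : ℝ, G (u,v) := hswap.symm
    _ = ∫ u : ℝ, (Icc (0:ℝ) 1).indicator (fun w => ∫ v in w..1, F w v) u := by
        congr 1
        funext u
        rw [innerB u]
    _ = ∫ u in (0:ℝ)..1, ∫ v in u..1, F u v := by
        rw [MeasureTheory.integral_indicator measurableSet_Icc,
          MeasureTheory.integral_Icc_eq_integral_Ioc,
          intervalIntegral.integral_of_le (by norm_num : (0:ℝ) ≤ 1)]

lemma part2_integral (p b c : ℕ) :
    (∫ v in (0:ℝ)..1, ∫ u in (0:ℝ)..v,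
        Real.log (1-u) * Real.log (1-v) * (u^p * (v-u)^b * (1-v)^c))
      = Bc c b * (Bc (c+b+1) p * ((hsum (c+b+2) (p+b+c+3))^2 + hsum2 (c+b+2) (p+b+c+3)))
        + Bc c b * hsum (c+1) (c+b+2) * (Bc (c+b+1) p * hsum (c+b+2) (p+b+c+3)) := by
  set F : ℝ → ℝ → ℝ :=
    fun u v => Real.log (1-u) * Real.log (1-v) * (u^p * (v-u)^b * (1-v)^c) with hFdef
  have hF : Measurable (Function.uncurry F) := by
    apply Measurable.mul
    apply Measurable.mul
    · exact Real.measurable_log.comp (measurable_const.sub measurable_fst)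
    · exact Real.measurable_log.comp (measurable_const.sub measurable_snd)
    · exact ((measurable_fst.pow_const p).mul
        ((measurable_snd.sub measurable_fst).pow_const b)).mul
        ((measurable_const.sub measurable_snd).pow_const c)
  have hbd : ∀ u v : ℝ, 0 ≤ u → u ≤ v → v ≤ 1 →
      |F u v| ≤ |Real.log (1-u)| * |Real.log (1-v)| := by
    intro u v h1 h2 h3
    rw [hFdef]
    dsimp only
    rw [abs_mul, abs_mul]
    have hM : |u^p * (v-u)^b * (1-v)^c| ≤ 1 := by
      rw [abs_mul, abs_mul, abs_pow, abs_pow, abs_pow]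
      have b1 : |u| ≤ 1 := by rw [abs_of_nonneg h1]; linarith
      have b2 : |v - u| ≤ 1 := by rw [abs_of_nonneg (by linarith)]; linarith
      have b3 : |1 - v| ≤ 1 := by rw [abs_of_nonneg (by linarith)]; linarith
      have e1 : |u|^p ≤ 1 := pow_le_one₀ (abs_nonneg _) b1
      have e2 : |v-u|^b ≤ 1 := pow_le_one₀ (abs_nonneg _) b2
      have e3 : |1-v|^c ≤ 1 := pow_le_one₀ (abs_nonneg _) b3
      have n1 : (0:ℝ) ≤ |u|^p := by positivity
      have n2 : (0:ℝ) ≤ |v-u|^b := by positivity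
      have n3 : (0:ℝ) ≤ |1-v|^c := by positivity
      nlinarith [mul_le_one₀ e1 n2 e2, mul_nonneg n1 n2]
    calc |Real.log (1-u)| * |Real.log (1-v)| * |u^p * (v-u)^b * (1-v)^c|
        ≤ |Real.log (1-u)| * |Real.log (1-v)| * 1 :=
          mul_le_mul_of_nonneg_left hM (by positivity)
      _ = |Real.log (1-u)| * |Real.log (1-v)| := by ring
  rw [show (∫ v in (0:ℝ)..1, ∫ u in (0:ℝ)..v,
      Real.log (1-u) * Real.log (1-v) * (u^p * (v-u)^b * (1-v)^c))
    = ∫ v in (0:ℝ)..1, ∫ u in (0:ℝ)..v, F u v from rfl]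
  rw [triangle_swap F hF hbd]
  -- now evaluate ∫ u in 0..1, ∫ v in u..1, F u v
  have step2 : (∫ u in (0:ℝ)..1, ∫ v in u..1, F u v)
      = ∫ u in (0:ℝ)..1,
          (Bc c b * (Real.log (1-u) ^ 2 * (u^p * (1-u)^(c+b+1)))
            - (Bc c b * hsum (c+1) (c+b+2)) * (Real.log (1-u) * (u^p * (1-u)^(c+b+1)))) := by
    rw [intervalIntegral.integral_of_le (by norm_num : (0:ℝ) ≤ 1),
      intervalIntegral.integral_of_le (by norm_num : (0:ℝ) ≤ 1)]
    apply MeasureTheory.setIntegral_congr_fun measurableSet_Ioc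
    intro u hu
    dsimp only
    have hpull : (∫ v in u..1, F u v)
        = (Real.log (1-u) * u^p) * ∫ v in u..1,
            Real.log (1-v) * ((v-u)^b * (1-v)^c) := by
      rw [← intervalIntegral.integral_const_mul]
      apply intervalIntegral.integral_congr
      intro v _
      rw [hFdef]
      dsimp only
      ring
    have hrefl := intervalIntegral.integral_comp_sub_left
      (f := fun y => Real.log (1-y) * ((y-u)^b * (1-y)^c)) (a := 0) (b := 1-u) 1
    have hrefl2 : (∫ v in u..1, Real.log (1-v) * ((v-u)^b * (1-v)^c))
        = ∫ x in (0:ℝ)..(1-u), Real.log x * (x^c * ((1-u)-x)^b) := by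
      rw [show (1:ℝ) - (1-u) = u by ring, show (1:ℝ) - (0:ℝ) = 1 by ring] at hrefl
      rw [← hrefl]
      apply intervalIntegral.integral_congr
      intro x _
      dsimp only
      rw [sub_sub_cancel]
      ring
    rcases eq_or_lt_of_le hu.2 with hu1 | hu1
    · -- u = 1
      rw [hpull, hrefl2, hu1]
      norm_num
    · rw [hpull, hrefl2, inner_formula c b (by linarith : (0:ℝ) < 1-u)]
      ring
  rw [step2]
  -- integrability of the reflected integrands
  have r2 : IntervalIntegrable
      (fun x : ℝ => Real.log (1-x)^2 * (x^p * (1-x)^(c+b+1))) volume 0 1 := by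
    have h0 := ((intInt_logpow 2 (c+b+1) p (by norm_num)).comp_sub_left 1).symm
    have e : (fun x : ℝ => Real.log (1-x)^2 * ((1-x)^(c+b+1) * (1-(1-x))^p))
        = fun x : ℝ => Real.log (1-x)^2 * (x^p * (1-x)^(c+b+1)) := by
      funext x
      rw [sub_sub_cancel]
      ring
    rw [← e]
    simpa using h0
  have r1 : IntervalIntegrable
      (fun x : ℝ => Real.log (1-x) * (x^p * (1-x)^(c+b+1))) volume 0 1 := by
    have h0 := ((intInt_logpow 1 (c+b+1) p (by norm_num)).comp_sub_left 1).symm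
    have e : (fun x : ℝ => Real.log (1-x)^1 * ((1-x)^(c+b+1) * (1-(1-x))^p))
        = fun x : ℝ => Real.log (1-x) * (x^p * (1-x)^(c+b+1)) := by
      funext x
      rw [sub_sub_cancel]
      ring
    rw [← e]
    simpa using h0
  rw [intervalIntegral.integral_sub (r2.const_mul _) (r1.const_mul _),
    intervalIntegral.integral_const_mul, intervalIntegral.integral_const_mul]
  -- evaluate the reflected integrals
  have v2 : (∫ x in (0:ℝ)..1, Real.log (1-x)^2 * (x^p * (1-x)^(c+b+1)))
      = Bc (c+b+1) p * ((hsum (c+b+2) (p+b+c+3))^2 + hsum2 (c+b+2) (p+b+c+3)) := by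
    have hrefl := intervalIntegral.integral_comp_sub_left
      (f := fun t => Real.log t^2 * (t^(c+b+1) * (1-t)^p)) (a := 0) (b := 1) 1
    rw [show (1:ℝ) - (1:ℝ) = 0 by ring, show (1:ℝ) - (0:ℝ) = 1 by ring] at hrefl
    have e : (∫ x in (0:ℝ)..1, Real.log (1-x)^2 * (x^p * (1-x)^(c+b+1)))
        = ∫ x in (0:ℝ)..1, Real.log (1-x)^2 * ((1-x)^(c+b+1) * (1-(1-x))^p) := by
      apply intervalIntegral.integral_congr
      intro x _
      dsimp only
      rw [sub_sub_cancel]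
      ring
    rw [e, hrefl, intQ p (c+b+1)]
    have e1 : (c+b+1) + 1 = c+b+2 := by omega
    have e2 : (c+b+1) + p + 2 = p+b+c+3 := by omega
    rw [e1, e2]
  have v1 : (∫ x in (0:ℝ)..1, Real.log (1-x) * (x^p * (1-x)^(c+b+1)))
      = -(Bc (c+b+1) p * hsum (c+b+2) (p+b+c+3)) := by
    have hrefl := intervalIntegral.integral_comp_sub_left
      (f := fun t => Real.log t * (t^(c+b+1) * (1-t)^p)) (a := 0) (b := 1) 1
    rw [show (1:ℝ) - (1:ℝ) = 0 by ring, show (1:ℝ) - (0:ℝ) = 1 by ring] at hrefl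
    have e : (∫ x in (0:ℝ)..1, Real.log (1-x) * (x^p * (1-x)^(c+b+1)))
        = ∫ x in (0:ℝ)..1, Real.log (1-x) * ((1-x)^(c+b+1) * (1-(1-x))^p) := by
      apply intervalIntegral.integral_congr
      intro x _
      dsimp only
      rw [sub_sub_cancel]
      ring
    rw [e, hrefl, intL p (c+b+1)]
    have e1 : (c+b+1) + 1 = c+b+2 := by omega
    have e2 : (c+b+1) + p + 2 = p+b+c+3 := by omega
    rw [e1, e2]
  rw [v2, v1]
  ring

lemma digamma_sub {a m : ℕ} (ha : 1 ≤ a) (h : a ≤ m) :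
    digamma (m:ℝ) - digamma (a:ℝ) = hsum a m := by
  induction m, h using Nat.le_induction with
  | base => simp [hsum]
  | succ m hm ih =>
    have hm0 : (0:ℝ) < (m:ℝ) := by exact_mod_cast (by omega : 0 < m)
    have hc : ((m+1:ℕ):ℝ) = (m:ℝ)+1 := by push_cast; ring
    rw [hc, digamma_add_one hm0, hsum_top a m hm]
    linarith [ih]

lemma trigamma_sub {a m : ℕ} (ha : 1 ≤ a) (h : a ≤ m) :
    trigamma (a:ℝ) - trigamma (m:ℝ) = hsum2 a m := by
  induction m, h using Nat.le_induction with
  | base => simp [hsum2]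
  | succ m hm ih =>
    have hm0 : (0:ℝ) < (m:ℝ) := by exact_mod_cast (by omega : 0 < m)
    have hc : ((m+1:ℕ):ℝ) = (m:ℝ)+1 := by push_cast; ring
    rw [hc, trigamma_add_one hm0, hsum2_top a m hm]
    have : (1:ℝ)/(m:ℝ)^2 = 1/(m:ℝ)^2 := rfl
    linarith [ih]

lemma hsum_cat {a m b : ℕ} (h1 : a ≤ m) (h2 : m ≤ b) : hsum a m + hsum m b = hsum a b :=
  Finset.sum_Ico_consecutive _ h1 h2

lemma Kfact (p b c : ℕ) :
    (((p+b+c+2).factorial : ℝ)/((p.factorial : ℝ) * b.factorial * c.factorial))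
      * (Bc p b * Bc (p+b+1) c) = 1 := by
  rw [Bc, Bc]
  have e : (p+b+1) + c + 1 = p+b+c+2 := by omega
  rw [e]
  have h1 : ((p.factorial : ℝ)) ≠ 0 := by exact_mod_cast Nat.factorial_ne_zero p
  have h2 : ((b.factorial : ℝ)) ≠ 0 := by exact_mod_cast Nat.factorial_ne_zero b
  have h3 : ((c.factorial : ℝ)) ≠ 0 := by exact_mod_cast Nat.factorial_ne_zero c
  have h4 : (((p+b+1).factorial : ℝ)) ≠ 0 := by exact_mod_cast Nat.factorial_ne_zero _
  have h5 : (((p+b+c+2).factorial : ℝ)) ≠ 0 := by exact_mod_cast Nat.factorial_ne_zero _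
  field_simp


/-- For `1 ≤ i < j ≤ n`, with `(U_(i), U_(j))` the order statistics of
`n` i.i.d. uniforms on `[0,1]` (with joint density
`c_{i,j,n} u^{i−1}(v−u)^{j−i−1}(1−v)^{n−j}` on `{0 < u < v < 1}`,
`c_{i,j,n} = n!/((i−1)!(j−i−1)!(n−j)!)`):
`Cov[ln U_(i), ln U_(j)] = ψ₁(j) − ψ₁(n+1)` and
`Cov[ln(1−U_(i)), ln(1−U_(j))] = ψ₁(n+1−i) − ψ₁(n+1)`, where
`Cov[X,Y] = E[XY] − E[X]E[Y]` and the means are the known digamma expressions. -/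
theorem covariance_log_orderStats
    (n i j : ℕ) (hn : 2 ≤ n) (hi1 : 1 ≤ i) (hij : i < j) (hjn : j ≤ n) :
    ((n.factorial : ℝ) /
        ((i - 1).factorial * (j - i - 1).factorial * (n - j).factorial)) *
        (∫ v in (0:ℝ)..1, ∫ u in (0:ℝ)..v,
          Real.log u * Real.log v *
            (u ^ (i - 1) * (v - u) ^ (j - i - 1) * (1 - v) ^ (n - j)))
      - (digamma i - digamma ((n : ℝ) + 1)) * (digamma j - digamma ((n : ℝ) + 1))
      = trigamma j - trigamma ((n : ℝ) + 1) ∧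
    ((n.factorial : ℝ) /
        ((i - 1).factorial * (j - i - 1).factorial * (n - j).factorial)) *
        (∫ v in (0:ℝ)..1, ∫ u in (0:ℝ)..v,
          Real.log (1 - u) * Real.log (1 - v) *
            (u ^ (i - 1) * (v - u) ^ (j - i - 1) * (1 - v) ^ (n - j)))
      - (digamma ((n : ℝ) + 1 - i) - digamma ((n : ℝ) + 1)) *
          (digamma ((n : ℝ) + 1 - j) - digamma ((n : ℝ) + 1))
      = trigamma ((n : ℝ) + 1 - i) - trigamma ((n : ℝ) + 1) := by
  obtain ⟨p, rfl⟩ : ∃ p, i = p + 1 := ⟨i-1, by omega⟩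
  obtain ⟨b, rfl⟩ : ∃ b, j = p + b + 2 := ⟨j-(p+1)-1, by omega⟩
  obtain ⟨c, rfl⟩ : ∃ c, n = p + b + c + 2 := ⟨n-(p+b+2), by omega⟩
  have e1 : p + 1 - 1 = p := by omega
  have e2 : p + b + 2 - (p+1) - 1 = b := by omega
  have e3 : p + b + c + 2 - (p+b+2) = c := by omega
  rw [e1, e2, e3]
  set K : ℝ := ((p+b+c+2).factorial : ℝ)
    / ((p.factorial : ℝ) * b.factorial * c.factorial) with hK
  -- digamma/trigamma translations
  have ecast1 : ((p+b+c+2 : ℕ):ℝ) + 1 = ((p+b+c+3 : ℕ):ℝ) := by push_cast; ring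
  have ecast2 : ((p+b+c+3 : ℕ):ℝ) - ((p+1 : ℕ):ℝ) = ((b+c+2 : ℕ):ℝ) := by
    push_cast; ring
  have ecast3 : ((p+b+c+3 : ℕ):ℝ) - ((p+b+2 : ℕ):ℝ) = ((c+1 : ℕ):ℝ) := by
    push_cast; ring
  have d1 : digamma ((p+1 : ℕ):ℝ) - digamma ((p+b+c+3 : ℕ):ℝ)
      = -hsum (p+1) (p+b+c+3) := by
    have := digamma_sub (a := p+1) (m := p+b+c+3) (by omega) (by omega)
    linarith
  have d2 : digamma ((p+b+2 : ℕ):ℝ) - digamma ((p+b+c+3 : ℕ):ℝ)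
      = -hsum (p+b+2) (p+b+c+3) := by
    have := digamma_sub (a := p+b+2) (m := p+b+c+3) (by omega) (by omega)
    linarith
  have d3 : digamma ((b+c+2 : ℕ):ℝ) - digamma ((p+b+c+3 : ℕ):ℝ)
      = -hsum (b+c+2) (p+b+c+3) := by
    have := digamma_sub (a := b+c+2) (m := p+b+c+3) (by omega) (by omega)
    linarith
  have d4 : digamma ((c+1 : ℕ):ℝ) - digamma ((p+b+c+3 : ℕ):ℝ)
      = -hsum (c+1) (p+b+c+3) := by
    have := digamma_sub (a := c+1) (m := p+b+c+3) (by omega) (by omega)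
    linarith
  have t2 : trigamma ((p+b+2 : ℕ):ℝ) - trigamma ((p+b+c+3 : ℕ):ℝ)
      = hsum2 (p+b+2) (p+b+c+3) :=
    trigamma_sub (by omega) (by omega)
  have t3 : trigamma ((b+c+2 : ℕ):ℝ) - trigamma ((p+b+c+3 : ℕ):ℝ)
      = hsum2 (b+c+2) (p+b+c+3) :=
    trigamma_sub (by omega) (by omega)
  constructor
  · rw [part1_integral p b c, ecast1, d1, d2, t2]
    have hKf := Kfact p b c
    have hcat := hsum_cat (a := p+1) (m := p+b+2) (b := p+b+c+3) (by omega) (by omega)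
    set B1 := Bc p b
    set B2 := Bc (p+b+1) c
    set H1 := hsum (p+1) (p+b+2)
    set H2 := hsum (p+b+2) (p+b+c+3)
    set S2 := hsum2 (p+b+2) (p+b+c+3)
    have expand : K * (B1 * (B2 * (H2^2 + S2)) + B1 * H1 * (B2 * H2))
        = (K * (B1 * B2)) * ((H2^2 + S2) + H1 * H2) := by ring
    rw [expand, hKf, one_mul, ← hcat]
    ring
  · rw [part2_integral p b c, ecast1, ecast2, ecast3, d3, d4, t3]
    have ebc : b+c+2 = c+b+2 := by omega
    rw [ebc]
    have hKf : K * (Bc c b * Bc (c+b+1) p) = 1 := by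
      have hkk := Kfact c b p
      have e4 : c + b + p + 2 = p+b+c+2 := by omega
      rw [e4] at hkk
      have hKeq : K = ((p+b+c+2).factorial : ℝ)
          / ((c.factorial : ℝ) * b.factorial * p.factorial) := by
        rw [hK]; ring_nf
      rw [hKeq]
      exact hkk
    have hcat := hsum_cat (a := c+1) (m := c+b+2) (b := p+b+c+3) (by omega) (by omega)
    rw [← hcat]
    set B1 := Bc c b
    set B2 := Bc (c+b+1) p
    set H1 := hsum (c+1) (c+b+2)
    set H2 := hsum (c+b+2) (p+b+c+3)
    set S2 := hsum2 (c+b+2) (p+b+c+3)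
    have expand : K * (B1 * (B2 * (H2^2 + S2)) + B1 * H1 * (B2 * H2))
        = (K * (B1 * B2)) * ((H2^2 + S2) + H1 * H2) := by ring
    rw [expand, hKf, one_mul]
    ring
end

section
/- Let n ≥ 2 and 1 ≤ i < j ≤ n. Then Cov[ln(U_(i)), ln(1−U_(j))] = −ψ₁(n+1), where E[ln(U_(i)) ln(1−U_(j))] is the integral of (ln u)(ln(1−v)) against the joint density c_{i,j,n} u^{i−1}(v−u)^{j−i−1}(1−v)^{n−j} over {0 < u < v < 1}, and Cov[X,Y] = E[XY] − E[X]E[Y]. -/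
set_option maxHeartbeats 1000000

open MeasureTheory intervalIntegral Real Set

lemma analyticAt_realGamma {x : ℝ} (hx : 0 < x) : AnalyticAt ℝ Real.Gamma x := by
  have h1 : AnalyticAt ℂ Complex.Gamma (x : ℂ) := by
    have hopen : IsOpen {z : ℂ | 0 < z.re} := isOpen_lt continuous_const Complex.continuous_re
    have hdiff : DifferentiableOn ℂ Complex.Gamma {z : ℂ | 0 < z.re} := by
      intro z hz
      refine (Complex.differentiableAt_Gamma z ?_).differentiableWithinAt
      intro m hm
      simp only [Set.mem_setOf_eq] at hz
      rw [hm] at hz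
      simp at hz
      have : (0:ℝ) ≤ m := m.cast_nonneg
      linarith
    exact hdiff.analyticAt (hopen.mem_nhds (by simpa using hx))
  have h2 : AnalyticAt ℝ (fun y : ℝ => (Complex.Gamma (y : ℂ)).re) x := by
    apply (Complex.reCLM.analyticAt _).comp
    exact (h1.restrictScalars).comp (Complex.ofRealCLM.analyticAt x)
  have : Real.Gamma = fun y : ℝ => (Complex.Gamma (y : ℂ)).re := by
    funext y; rw [Complex.Gamma_ofReal]; simp
  rw [this]; exact h2

lemma contDiffAt_logGamma {x : ℝ} (hx : 0 < x) :
    ContDiffAt ℝ ⊤ (fun y => Real.log (Real.Gamma y)) x := by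
  have h := (analyticAt_realGamma hx).contDiffAt (n := ⊤)
  have hne : Real.Gamma x ≠ 0 := (Real.Gamma_pos_of_pos hx).ne'
  exact (Real.contDiffAt_log.mpr hne).comp x h

lemma hasDerivAt_logGamma {x : ℝ} (hx : 0 < x) :
    HasDerivAt (fun y => Real.log (Real.Gamma y)) (digamma x) x := by
  have := ((contDiffAt_logGamma hx).differentiableAt (by simp))
  exact this.hasDerivAt

lemma hasDerivAt_digamma {x : ℝ} (hx : 0 < x) :
    HasDerivAt digamma (trigamma x) x := by
  obtain ⟨u, hu, hcd⟩ := (contDiffAt_logGamma hx).contDiffOn (m := 2) (by norm_num) (fun h => by simp at h)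
  obtain ⟨v, hvu, hv, hxv⟩ := mem_nhds_iff.mp hu
  have hcd' : ContDiffOn ℝ 2 (fun y => Real.log (Real.Gamma y)) v := hcd.mono hvu
  have hd : ContDiffOn ℝ 1 digamma v :=
    hcd'.deriv_of_isOpen (m := 1) hv (by norm_num)
  exact (((hd x hxv).differentiableWithinAt one_ne_zero).differentiableAt
    (hv.mem_nhds hxv)).hasDerivAt


lemma abs_log_le_rpow {t c : ℝ} (ht : 0 < t) (ht1 : t ≤ 1) (hc : 0 < c) :
    |Real.log t| ≤ c⁻¹ * t ^ (-c) := by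
  rw [abs_of_nonpos (Real.log_nonpos ht.le ht1)]
  have h1 : Real.log (t ^ (-c)) ≤ t ^ (-c) - 1 :=
    Real.log_le_sub_one_of_pos (Real.rpow_pos_of_pos ht _)
  rw [Real.log_rpow ht] at h1
  have h2 : (0:ℝ) < t ^ (-c) := Real.rpow_pos_of_pos ht _
  have := mul_le_mul_of_nonneg_left (by linarith : -c * Real.log t ≤ t ^ (-c)) (by positivity : (0:ℝ) ≤ c⁻¹)
  calc -Real.log t = c⁻¹ * (-c * Real.log t) := by field_simp
    _ ≤ c⁻¹ * t ^ (-c) := this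

lemma II_rpow_rpow {x y : ℝ} (hx : 0 < x) (hy : 0 < y) :
    IntervalIntegrable (fun t => t ^ (x-1) * (1-t) ^ (y-1)) volume 0 1 := by
  have half : ∀ {p q : ℝ}, 0 < p → 0 < q →
      IntervalIntegrable (fun t : ℝ => t ^ (p-1) * (1-t) ^ (q-1)) volume 0 (1/2) := by
    intro p q hp hq
    apply IntervalIntegrable.mul_continuousOn
    · exact intervalIntegral.intervalIntegrable_rpow' (by linarith)
    · apply ContinuousOn.rpow_const
      · exact (continuous_const.sub continuous_id).continuousOn
      · intro t ht
        rw [Set.uIcc_of_le (by norm_num)] at ht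
        left
        have := ht.2
        simp only [Set.mem_Icc] at *
        intro h; rw [sub_eq_zero] at h; linarith [ht.2]
  have h1 : IntervalIntegrable (fun t : ℝ => t ^ (x-1) * (1-t) ^ (y-1)) volume 0 (1/2) :=
    half hx hy
  have h2' := (half hy hx).comp_sub_left 1
  norm_num at h2'
  have h2 : IntervalIntegrable (fun t : ℝ => t ^ (x-1) * (1-t) ^ (y-1)) volume (1/2) 1 := by
    have := h2'.symm
    simpa [mul_comm] using this
  exact h1.trans h2


lemma meas_aux (w : ℝ → ℝ) (hw : Measurable w) (r : ℝ) :
    AEStronglyMeasurable (fun t => w t * (1-t) ^ r)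
      (volume.restrict (Set.uIoc (0:ℝ) 1)) :=
  ((hw.mul (by fun_prop : Measurable fun t : ℝ => (1-t) ^ r)).aestronglyMeasurable).restrict

lemma II_weight (w : ℝ → ℝ) (hw : Measurable w) {p C : ℝ} (hp : 0 < p)
    (hbound : ∀ t ∈ Set.Ioc (0:ℝ) 1, |w t| ≤ C * t ^ (p-1))
    {y : ℝ} (hy : 0 < y) :
    IntervalIntegrable (fun t => w t * (1-t) ^ (y-1)) volume 0 1 := by
  apply IntervalIntegrable.mono_fun' ((II_rpow_rpow hp hy).const_mul C)
  · exact meas_aux w hw _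
  · rw [Filter.EventuallyLE, ae_restrict_iff' measurableSet_uIoc]
    refine Filter.Eventually.of_forall (fun t ht => ?_)
    rw [Set.uIoc_of_le (by norm_num : (0:ℝ) ≤ 1)] at ht
    have h1t : (0:ℝ) ≤ 1 - t := by linarith [ht.2]
    have : ‖w t * (1-t) ^ (y-1)‖ = |w t| * (1-t)^(y-1) := by
      rw [norm_mul, Real.norm_eq_abs, Real.norm_eq_abs,
        abs_of_nonneg (Real.rpow_nonneg h1t _)]
    rw [this]
    calc |w t| * (1-t)^(y-1) ≤ (C * t ^ (p-1)) * (1-t)^(y-1) :=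
          mul_le_mul_of_nonneg_right (hbound t ht) (Real.rpow_nonneg h1t _)
      _ = C * (t ^ (p-1) * (1-t)^(y-1)) := by ring

lemma key_hasDerivAt (w : ℝ → ℝ) (hw : Measurable w) {p C : ℝ} (hp : 0 < p)
    (hbound : ∀ t ∈ Set.Ioc (0:ℝ) 1, |w t| ≤ C * t ^ (p-1))
    {y : ℝ} (hy : 0 < y) :
    IntervalIntegrable (fun t => w t * (Real.log (1-t) * (1-t) ^ (y-1))) volume 0 1 ∧
    HasDerivAt (fun z => ∫ t in (0:ℝ)..1, w t * (1-t) ^ (z-1))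
      (∫ t in (0:ℝ)..1, w t * (Real.log (1-t) * (1-t) ^ (y-1))) y := by
  have hC : 0 ≤ C := by
    have := hbound 1 ⟨one_pos, le_rfl⟩
    have h1 : (1:ℝ) ^ (p-1) = 1 := Real.one_rpow _
    rw [h1, mul_one] at this
    exact le_trans (abs_nonneg _) this
  have hne : ∀ᵐ t : ℝ ∂volume, t ≠ 1 := by
    refine MeasureTheory.ae_iff.mpr ?_
    simp only [not_not, Set.setOf_eq_eq_singleton]
    exact measure_singleton 1
  have h4y : (0:ℝ) < y/4 := by linarith
  have key := intervalIntegral.hasDerivAt_integral_of_dominated_loc_of_deriv_le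
    (F := fun z t => w t * (1-t) ^ (z-1))
    (F' := fun z t => w t * (Real.log (1-t) * (1-t) ^ (z-1)))
    (bound := fun t => (C*(4/y)) * (t ^ (p-1) * (1-t) ^ (y/4-1)))
    (a := (0:ℝ)) (b := 1) (μ := volume) (x₀ := y)
    (Metric.ball_mem_nhds y (half_pos hy))
    (Filter.Eventually.of_forall (fun z => meas_aux w hw (z-1)))
    (II_weight w hw hp hbound hy)
    (((hw.mul ((Real.measurable_log.comp (measurable_const.sub measurable_id)).mul
      (by fun_prop : Measurable fun t : ℝ => (1-t) ^ (y-1)))).aestronglyMeasurable).restrict)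
    ?_ ?_ ?_
  · exact key
  · -- bound
    refine Filter.Eventually.of_forall (fun t ht z hz => ?_)
    rw [Set.uIoc_of_le (by norm_num : (0:ℝ) ≤ 1)] at ht
    obtain ⟨ht0, ht1⟩ := ht
    have h1t : (0:ℝ) ≤ 1 - t := by linarith
    rw [Metric.mem_ball, Real.dist_eq, abs_lt] at hz
    rcases eq_or_lt_of_le ht1 with rfl | htlt
    · simp only [sub_self, Real.log_zero, zero_mul, mul_zero, norm_zero]
      positivity
    · have h1t' : (0:ℝ) < 1 - t := by linarith
      have h1t1 : 1 - t ≤ 1 := by linarith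
      have e1 : (1-t) ^ (z-1) ≤ (1-t) ^ (y/2-1) :=
        Real.rpow_le_rpow_of_exponent_ge h1t' h1t1 (by linarith [hz.1])
      have e2 : |Real.log (1-t)| ≤ (y/4)⁻¹ * (1-t) ^ (-(y/4)) :=
        abs_log_le_rpow h1t' h1t1 h4y
      have e3 : ‖w t * (Real.log (1-t) * (1-t) ^ (z-1))‖
          = |w t| * (|Real.log (1-t)| * (1-t) ^ (z-1)) := by
        rw [norm_mul, norm_mul, Real.norm_eq_abs, Real.norm_eq_abs, Real.norm_eq_abs,
          abs_of_nonneg (Real.rpow_nonneg h1t _)]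
      rw [e3]
      have hrw : (y/4)⁻¹ * (1-t) ^ (-(y/4)) * (1-t) ^ (y/2-1)
          = (4/y) * (1-t) ^ (y/4-1) := by
        rw [mul_assoc, ← Real.rpow_add h1t', inv_div,
          show -(y/4) + (y/2-1) = y/4-1 by ring]
      calc |w t| * (|Real.log (1-t)| * (1-t) ^ (z-1))
          ≤ (C * t ^ (p-1)) * (((y/4)⁻¹ * (1-t) ^ (-(y/4))) * (1-t) ^ (y/2-1)) := by
            apply mul_le_mul (hbound t ⟨ht0, ht1⟩)
            · exact mul_le_mul e2 e1 (Real.rpow_nonneg h1t _) (by positivity)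
            · positivity
            · positivity
        _ = (C*(4/y)) * (t ^ (p-1) * (1-t) ^ (y/4-1)) := by rw [hrw]; ring
  · exact (II_rpow_rpow hp h4y).const_mul _
  · -- differentiability
    filter_upwards [hne] with t htne htmem z hz
    rw [Set.uIoc_of_le (by norm_num : (0:ℝ) ≤ 1)] at htmem
    have h1t : (0:ℝ) < 1 - t := by
      rcases lt_or_eq_of_le htmem.2 with h | h
      · linarith
      · exact absurd h htne
    have hfun : (fun z : ℝ => w t * (1-t) ^ (z-1))
        = fun z : ℝ => w t * Real.exp ((z-1) * Real.log (1-t)) := by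
      funext u
      rw [Real.rpow_def_of_pos h1t]; ring
    rw [hfun]
    have hd : HasDerivAt (fun z : ℝ => Real.exp ((z-1) * Real.log (1-t)))
        (Real.exp ((z-1) * Real.log (1-t)) * Real.log (1-t)) z := by
      have hlin : HasDerivAt (fun z : ℝ => (z-1) * Real.log (1-t)) (Real.log (1-t)) z := by
        simpa using ((hasDerivAt_id z).sub_const 1).mul_const (Real.log (1-t))
      simpa using hlin.exp
    have := hd.const_mul (w t)
    convert this using 1
    · rfl
    rw [Real.rpow_def_of_pos h1t]; ring



lemma betaR_eq {x y : ℝ} (hx : 0 < x) (hy : 0 < y) :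
    (∫ t in (0:ℝ)..1, t ^ (x-1) * (1-t) ^ (y-1))
      = Real.Gamma x * Real.Gamma y / Real.Gamma (x+y) := by
  have hC := Complex.Gamma_mul_Gamma_eq_betaIntegral
    (s := (x:ℂ)) (t := (y:ℂ)) (by simpa using hx) (by simpa using hy)
  have hbeta : Complex.betaIntegral (x:ℂ) (y:ℂ)
      = ((∫ t in (0:ℝ)..1, t ^ (x-1) * (1-t) ^ (y-1) : ℝ) : ℂ) := by
    rw [Complex.betaIntegral, ← intervalIntegral.integral_ofReal]
    refine intervalIntegral.integral_congr_ae ?_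
    have hne : ∀ᵐ t : ℝ ∂volume, t ≠ 0 := by
      refine MeasureTheory.ae_iff.mpr ?_
      simp only [not_not, Set.setOf_eq_eq_singleton]
      exact measure_singleton 0
    filter_upwards [hne] with t h0 ht
    rw [Set.uIoc_of_le (by norm_num : (0:ℝ) ≤ 1)] at ht
    have ht0 : 0 < t := lt_of_le_of_ne ht.1.le (Ne.symm h0)
    have h1t : (0:ℝ) ≤ 1 - t := by linarith [ht.2]
    rw [Complex.ofReal_mul, Complex.ofReal_cpow ht0.le, Complex.ofReal_cpow h1t]
    push_cast
    ring
  rw [hbeta, Complex.Gamma_ofReal, Complex.Gamma_ofReal, ← Complex.ofReal_mul] at hC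
  have hxy : ((x:ℂ) + y) = (((x + y : ℝ)):ℂ) := by push_cast; ring
  rw [hxy, Complex.Gamma_ofReal, ← Complex.ofReal_mul] at hC
  have h := Complex.ofReal_injective hC
  have hG : Real.Gamma (x+y) ≠ 0 := (Real.Gamma_pos_of_pos (by linarith)).ne'
  rw [eq_div_iff hG]
  linarith [h]

lemma hasDerivAt_Gamma {x : ℝ} (hx : 0 < x) :
    HasDerivAt Real.Gamma (digamma x * Real.Gamma x) x := by
  have h := (hasDerivAt_logGamma hx).exp
  have hpos : ∀ᶠ z in nhds x, z ∈ Set.Ioi (0:ℝ) := Ioi_mem_nhds hx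
  have heq : Real.Gamma =ᶠ[nhds x] fun z => Real.exp (Real.log (Real.Gamma z)) := by
    filter_upwards [hpos] with z hz
    rw [Real.exp_log (Real.Gamma_pos_of_pos hz)]
  have := h.congr_of_eventuallyEq heq
  rw [Real.exp_log (Real.Gamma_pos_of_pos hx)] at this
  simpa [mul_comm] using this

noncomputable def Greal (x y : ℝ) : ℝ := Real.Gamma x * Real.Gamma y / Real.Gamma (x+y)

lemma hasDerivAt_G_y {x y : ℝ} (hx : 0 < x) (hy : 0 < y) :
    HasDerivAt (fun z => Greal x z) (Greal x y * (digamma y - digamma (x+y))) y := by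
  have hxy : (0:ℝ) < x + y := by linarith
  have hnum : HasDerivAt (fun z => Real.Gamma x * Real.Gamma z)
      (Real.Gamma x * (digamma y * Real.Gamma y)) y := (hasDerivAt_Gamma hy).const_mul _
  have hden : HasDerivAt (fun z => Real.Gamma (x + z))
      (digamma (x+y) * Real.Gamma (x+y)) y := by
    have := (hasDerivAt_Gamma hxy).comp y ((hasDerivAt_id y).const_add x)
    simpa [Function.comp_def] using this
  have hG : Real.Gamma (x+y) ≠ 0 := (Real.Gamma_pos_of_pos hxy).ne'
  have := hnum.div hden hG
  convert this using 1
  · rfl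
  · rfl
  · rfl
  unfold Greal
  field_simp

lemma bound_w1 {x : ℝ} (hx : 0 < x) :
    ∀ t ∈ Set.Ioc (0:ℝ) 1, |(fun t : ℝ => t ^ (x-1)) t| ≤ 1 * t ^ (x-1) := by
  intro t ht
  rw [abs_of_nonneg (Real.rpow_nonneg ht.1.le _), one_mul]

lemma bound_w2 {x : ℝ} (hx : 0 < x) :
    ∀ t ∈ Set.Ioc (0:ℝ) 1, |(fun t : ℝ => Real.log t * t ^ (x-1)) t| ≤ (2/x) * t ^ (x/2-1) := by
  intro t ht
  obtain ⟨ht0, ht1⟩ := ht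
  have e1 : |Real.log t * t ^ (x-1)| = |Real.log t| * t ^ (x-1) := by
    rw [abs_mul, abs_of_nonneg (Real.rpow_nonneg ht0.le _)]
  rw [e1]
  have e2 : |Real.log t| ≤ (x/2)⁻¹ * t ^ (-(x/2)) := abs_log_le_rpow ht0 ht1 (by linarith)
  calc |Real.log t| * t ^ (x-1) ≤ ((x/2)⁻¹ * t ^ (-(x/2))) * t ^ (x-1) :=
        mul_le_mul_of_nonneg_right e2 (Real.rpow_nonneg ht0.le _)
    _ = (2/x) * t ^ (x/2-1) := by
        rw [mul_assoc, ← Real.rpow_add ht0, inv_div, show -(x/2) + (x-1) = x/2-1 by ring]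

lemma E2 {x y : ℝ} (hx : 0 < x) (hy : 0 < y) :
    (∫ t in (0:ℝ)..1, t ^ (x-1) * (Real.log (1-t) * (1-t) ^ (y-1)))
      = Greal x y * (digamma y - digamma (x+y)) := by
  have h1 := (key_hasDerivAt (fun t => t ^ (x-1)) (by fun_prop) hx (bound_w1 hx) hy).2
  have h2 := hasDerivAt_G_y hx hy
  have heq : (fun z => Greal x z)
      =ᶠ[nhds y] (fun z => ∫ t in (0:ℝ)..1, t ^ (x-1) * (1-t) ^ (z-1)) := by
    filter_upwards [Ioi_mem_nhds hy] with z hz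
    rw [betaR_eq hx hz]; rfl
  exact ((h2.congr_of_eventuallyEq heq.symm).unique h1).symm

lemma E1 {x y : ℝ} (hx : 0 < x) (hy : 0 < y) :
    (∫ t in (0:ℝ)..1, (Real.log t * t ^ (x-1)) * (1-t) ^ (y-1))
      = Greal x y * (digamma x - digamma (x+y)) := by
  have hsub := intervalIntegral.integral_comp_sub_left
    (fun t => t ^ (y-1) * (Real.log (1-t) * (1-t) ^ (x-1))) 1 (a := (0:ℝ)) (b := 1)
  norm_num at hsub
  rw [E2 hy hx] at hsub
  have hshape : (∫ t in (0:ℝ)..1, (Real.log t * t ^ (x-1)) * (1-t) ^ (y-1))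
      = ∫ t in (0:ℝ)..1, (1 - t) ^ (y-1) * (Real.log t * t ^ (x-1)) := by
    apply intervalIntegral.integral_congr
    intro t _; ring
  rw [hshape, hsub]
  unfold Greal
  rw [add_comm y x, mul_comm (Real.Gamma y) (Real.Gamma x)]

lemma E3 {x y : ℝ} (hx : 0 < x) (hy : 0 < y) :
    (∫ t in (0:ℝ)..1, (Real.log t * t ^ (x-1)) * (Real.log (1-t) * (1-t) ^ (y-1)))
      = Greal x y * ((digamma x - digamma (x+y)) * (digamma y - digamma (x+y))
          - trigamma (x+y)) := by
  have hxy : (0:ℝ) < x + y := by linarith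
  have h1 := (key_hasDerivAt (fun t => Real.log t * t ^ (x-1))
    (Real.measurable_log.mul (by fun_prop))
    (by linarith : (0:ℝ) < x/2) (bound_w2 hx) hy).2
  have hψ : HasDerivAt (fun z => digamma x - digamma (x+z)) (-(trigamma (x+y))) y := by
    have := ((hasDerivAt_digamma hxy).comp y ((hasDerivAt_id y).const_add x)).const_sub
      (digamma x)
    simpa using this
  have h2 := (hasDerivAt_G_y hx hy).mul hψ
  have heq : (fun z => Greal x z * (digamma x - digamma (x+z)))
      =ᶠ[nhds y] (fun z => ∫ t in (0:ℝ)..1, (Real.log t * t ^ (x-1)) * (1-t) ^ (z-1)) := by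
    filter_upwards [Ioi_mem_nhds hy] with z hz
    rw [E1 hx hz]
  have := (h2.congr_of_eventuallyEq heq.symm).unique h1
  rw [← this]
  ring



lemma main_aux (a b c : ℕ) :
    (((a+b+c+2).factorial : ℝ) / ((a.factorial) * (b.factorial) * (c.factorial))) *
      (∫ v in (0:ℝ)..1, ∫ u in (0:ℝ)..v,
        Real.log u * Real.log (1-v) * (u ^ a * (v-u) ^ b * (1-v) ^ c))
    = (digamma ((a:ℝ)+1) - digamma ((a:ℝ)+(b:ℝ)+(c:ℝ)+3)) *
        (digamma ((c:ℝ)+1) - digamma ((a:ℝ)+(b:ℝ)+(c:ℝ)+3))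
      - trigamma ((a:ℝ)+(b:ℝ)+(c:ℝ)+3) := by
  have hX : (0:ℝ) < (a:ℝ)+1 := by positivity
  have hY : (0:ℝ) < (b:ℝ)+1 := by positivity
  have hZ : (0:ℝ) < (c:ℝ)+1 := by positivity
  have hXY : (0:ℝ) < (a:ℝ)+(b:ℝ)+2 := by positivity
  set B₀ : ℝ := ∫ t in (0:ℝ)..1, t ^ ((a:ℝ)) * (1-t) ^ ((b:ℝ)) with hB₀
  set D₀ : ℝ := ∫ t in (0:ℝ)..1, (Real.log t * t ^ ((a:ℝ))) * (1-t) ^ ((b:ℝ)) with hD₀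
  -- integrability of basic weights
  have hg : IntervalIntegrable (fun t : ℝ => t ^ ((a:ℝ)) * (1-t) ^ ((b:ℝ))) volume 0 1 := by
    have := II_rpow_rpow hX hY
    simpa using this
  have hlg : IntervalIntegrable (fun t : ℝ => (Real.log t * t ^ ((a:ℝ))) * (1-t) ^ ((b:ℝ)))
      volume 0 1 := by
    have := II_weight (fun t : ℝ => Real.log t * t ^ (((a:ℝ)+1)-1))
      (Real.measurable_log.mul (by fun_prop)) (by positivity : (0:ℝ) < ((a:ℝ)+1)/2)
      (bound_w2 hX) hY
    simpa using this
  -- inner integral evaluation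
  have inner_eq : ∀ v ∈ Set.Ioc (0:ℝ) 1,
      (∫ u in (0:ℝ)..v, Real.log u * Real.log (1-v) * (u ^ a * (v-u) ^ b * (1-v) ^ c))
      = B₀ * ((Real.log v * v ^ (((a:ℝ)+(b:ℝ)+2)-1)) * (Real.log (1-v) * (1-v) ^ (((c:ℝ)+1)-1)))
        + D₀ * (v ^ (((a:ℝ)+(b:ℝ)+2)-1) * (Real.log (1-v) * (1-v) ^ (((c:ℝ)+1)-1))) := by
    intro v hv
    obtain ⟨hv0, hv1⟩ := hv
    have h1v : (0:ℝ) ≤ 1 - v := by linarith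
    -- pull out the constant factor in u
    have hfun : (fun u => Real.log u * Real.log (1-v) * (u ^ a * (v-u) ^ b * (1-v) ^ c))
        = fun u => (Real.log (1-v) * (1-v) ^ c) * (Real.log u * (u ^ a * (v-u) ^ b)) := by
      funext u; ring
    rw [hfun, intervalIntegral.integral_const_mul]
    -- substitution u = v * t
    have hsub := intervalIntegral.smul_integral_comp_mul_left
      (fun u => Real.log u * (u ^ a * (v-u) ^ b)) v (a := (0:ℝ)) (b := 1)
    norm_num at hsub
    rw [← hsub]
    -- rewrite the substituted integrand a.e.
    have hae : (∫ t in (0:ℝ)..1, Real.log (v*t) * ((v*t) ^ a * (v - v*t) ^ b))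
        = ∫ t in (0:ℝ)..1, v ^ ((a:ℝ)+(b:ℝ)) *
            (Real.log v * (t ^ ((a:ℝ)) * (1-t) ^ ((b:ℝ)))
              + Real.log t * t ^ ((a:ℝ)) * (1-t) ^ ((b:ℝ))) := by
      apply intervalIntegral.integral_congr_ae
      have hne : ∀ᵐ t : ℝ ∂volume, t ≠ 0 := by
        refine MeasureTheory.ae_iff.mpr ?_
        simp only [not_not, Set.setOf_eq_eq_singleton]
        exact measure_singleton 0
      filter_upwards [hne] with t ht0 htm
      rw [Set.uIoc_of_le (by norm_num : (0:ℝ) ≤ 1)] at htm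
      have ht0' : 0 < t := lt_of_le_of_ne htm.1.le (Ne.symm ht0)
      have h1t : (0:ℝ) ≤ 1 - t := by linarith [htm.2]
      rw [Real.log_mul hv0.ne' ht0'.ne']
      rw [show v - v*t = v * (1-t) by ring, mul_pow, mul_pow,
        ← Real.rpow_natCast v a, ← Real.rpow_natCast t a,
        ← Real.rpow_natCast v b, ← Real.rpow_natCast (1-t) b,
        Real.rpow_add hv0]
      ring
    rw [hae, intervalIntegral.integral_const_mul]
    have hsplit : (∫ t in (0:ℝ)..1,
          (Real.log v * (t ^ ((a:ℝ)) * (1-t) ^ ((b:ℝ)))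
            + Real.log t * t ^ ((a:ℝ)) * (1-t) ^ ((b:ℝ))))
        = Real.log v * B₀ + D₀ := by
      rw [intervalIntegral.integral_add (hg.const_mul _) (by simpa [mul_assoc] using hlg),
        intervalIntegral.integral_const_mul]
    rw [hsplit]
    -- assemble powers of v and (1-v)
    rw [← Real.rpow_natCast (1-v) c]
    have hv' : v ^ (((a:ℝ)+(b:ℝ)+2)-1) = v * v ^ ((a:ℝ)+(b:ℝ)) := by
      rw [show ((a:ℝ)+(b:ℝ)+2)-1 = ((a:ℝ)+(b:ℝ)) + 1 by ring, Real.rpow_add hv0,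
        Real.rpow_one]
      ring
    rw [hv']
    have hZc : (1-v) ^ (((c:ℝ)+1)-1) = (1-v) ^ ((c:ℝ)) := by norm_num
    rw [hZc]
    ring
  -- outer integral
  have hI3 := key_hasDerivAt (fun t : ℝ => Real.log t * t ^ (((a:ℝ)+(b:ℝ)+2)-1))
    (Real.measurable_log.mul (by fun_prop)) (by positivity : (0:ℝ) < ((a:ℝ)+(b:ℝ)+2)/2)
    (bound_w2 hXY) hZ
  have hI2 := key_hasDerivAt (fun t : ℝ => t ^ (((a:ℝ)+(b:ℝ)+2)-1))
    (by fun_prop) hXY (bound_w1 hXY) hZ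
  have houter : (∫ v in (0:ℝ)..1, ∫ u in (0:ℝ)..v,
        Real.log u * Real.log (1-v) * (u ^ a * (v-u) ^ b * (1-v) ^ c))
      = B₀ * (∫ v in (0:ℝ)..1,
            (Real.log v * v ^ (((a:ℝ)+(b:ℝ)+2)-1)) * (Real.log (1-v) * (1-v) ^ (((c:ℝ)+1)-1)))
        + D₀ * (∫ v in (0:ℝ)..1,
            v ^ (((a:ℝ)+(b:ℝ)+2)-1) * (Real.log (1-v) * (1-v) ^ (((c:ℝ)+1)-1))) := by
    rw [← intervalIntegral.integral_const_mul, ← intervalIntegral.integral_const_mul,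
      ← intervalIntegral.integral_add (hI3.1.const_mul B₀) (hI2.1.const_mul D₀)]
    apply intervalIntegral.integral_congr_ae
    refine Filter.Eventually.of_forall (fun v hv => ?_)
    rw [Set.uIoc_of_le (by norm_num : (0:ℝ) ≤ 1)] at hv
    rw [inner_eq v hv]
  rw [houter, E3 hXY hZ, E2 hXY hZ]
  -- evaluate B₀ and D₀
  have hB : B₀ = Greal ((a:ℝ)+1) ((b:ℝ)+1) := by
    rw [hB₀]
    have h := betaR_eq hX hY
    simp only [add_sub_cancel_right] at h
    rw [h]
    rfl
  have hD : D₀ = Greal ((a:ℝ)+1) ((b:ℝ)+1) *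
      (digamma ((a:ℝ)+1) - digamma ((a:ℝ)+(b:ℝ)+2)) := by
    have h := E1 hX hY
    simp only [add_sub_cancel_right] at h
    rw [hD₀, h, show ((a:ℝ)+1)+((b:ℝ)+1) = (a:ℝ)+(b:ℝ)+2 by ring]
  rw [hB, hD]
  -- factorial values
  have hG1 : Greal ((a:ℝ)+1) ((b:ℝ)+1)
      = (a.factorial : ℝ) * (b.factorial) / ((a+b+1).factorial) := by
    unfold Greal
    rw [show ((a:ℝ)+1) = ((a:ℕ):ℝ)+1 by norm_num, Real.Gamma_nat_eq_factorial,
      show ((b:ℝ)+1) = ((b:ℕ):ℝ)+1 by norm_num]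
    rw [Real.Gamma_nat_eq_factorial]
    rw [show ((a:ℕ):ℝ)+1+(((b:ℕ):ℝ)+1) = (((a+b+1:ℕ)):ℝ)+1 by push_cast; ring,
      Real.Gamma_nat_eq_factorial]
  have hG2 : Greal ((a:ℝ)+(b:ℝ)+2) ((c:ℝ)+1)
      = ((a+b+1).factorial : ℝ) * (c.factorial) / ((a+b+c+2).factorial) := by
    unfold Greal
    rw [show ((a:ℝ)+(b:ℝ)+2) = (((a+b+1:ℕ)):ℝ)+1 by push_cast; ring,
      Real.Gamma_nat_eq_factorial,
      show ((c:ℝ)+1) = ((c:ℕ):ℝ)+1 by norm_num, Real.Gamma_nat_eq_factorial,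
      show (((a+b+1:ℕ)):ℝ)+1+(((c:ℕ):ℝ)+1) = (((a+b+c+2:ℕ)):ℝ)+1 by push_cast; ring,
      Real.Gamma_nat_eq_factorial]
  have hsum : (a:ℝ)+(b:ℝ)+2+((c:ℝ)+1) = (a:ℝ)+(b:ℝ)+(c:ℝ)+3 := by ring
  rw [hsum] at *
  have hfac1 : (0:ℝ) < (a.factorial : ℝ) := by positivity
  have hfac2 : (0:ℝ) < (b.factorial : ℝ) := by positivity
  have hfac3 : (0:ℝ) < (c.factorial : ℝ) := by positivity
  have hfac4 : (0:ℝ) < ((a+b+1).factorial : ℝ) := by positivity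
  have hfac5 : (0:ℝ) < ((a+b+c+2).factorial : ℝ) := by positivity
  rw [hG1, hG2]
  field_simp
  ring

/-- For `1 ≤ i < j ≤ n`, with `(U_(i), U_(j))` the order statistics of
`n` i.i.d. uniforms on `[0,1]` (with joint density
`c_{i,j,n} u^{i−1}(v−u)^{j−i−1}(1−v)^{n−j}` on `{0 < u < v < 1}`,
`c_{i,j,n} = n!/((i−1)!(j−i−1)!(n−j)!)`):
`Cov[ln U_(i), ln(1−U_(j))] = −ψ₁(n+1)`, where `Cov[X,Y] = E[XY] − E[X]E[Y]`,
`E[ln U_(i)] = ψ(i) − ψ(n+1)` and `E[ln(1−U_(j))] = ψ(n+1−j) − ψ(n+1)`. -/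
theorem covariance_log_logOneSub_orderStats
    (n i j : ℕ) (hn : 2 ≤ n) (hi1 : 1 ≤ i) (hij : i < j) (hjn : j ≤ n) :
    ((n.factorial : ℝ) /
        ((i - 1).factorial * (j - i - 1).factorial * (n - j).factorial)) *
        (∫ v in (0:ℝ)..1, ∫ u in (0:ℝ)..v,
          Real.log u * Real.log (1 - v) *
            (u ^ (i - 1) * (v - u) ^ (j - i - 1) * (1 - v) ^ (n - j)))
      - (digamma i - digamma ((n : ℝ) + 1)) *
          (digamma ((n : ℝ) + 1 - j) - digamma ((n : ℝ) + 1))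
      = -trigamma ((n : ℝ) + 1) := by
  obtain ⟨a, rfl⟩ : ∃ a, i = a + 1 := ⟨i - 1, by omega⟩
  obtain ⟨b, rfl⟩ : ∃ b, j = (a + 1) + (b + 1) := ⟨j - a - 2, by omega⟩
  obtain ⟨c, rfl⟩ : ∃ c, n = a + b + c + 2 := ⟨n - (a + b + 2), by omega⟩
  have e1 : (a + 1) - 1 = a := by omega
  have e2 : ((a + 1) + (b + 1)) - (a + 1) - 1 = b := by omega
  have e3 : (a + b + c + 2) - ((a + 1) + (b + 1)) = c := by omega
  rw [e1, e2, e3]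
  have hmain := main_aux a b c
  have c3 : ((a+b+c+2 : ℕ):ℝ) + 1 - (((a+1)+(b+1) : ℕ):ℝ) = (c:ℝ) + 1 := by
    push_cast; ring
  have c2 : ((a+b+c+2 : ℕ):ℝ) + 1 = (a:ℝ)+(b:ℝ)+(c:ℝ)+3 := by push_cast; ring
  have c1 : ((a+1 : ℕ):ℝ) = (a:ℝ)+1 := by push_cast; ring
  rw [c3, c2, c1]
  linarith [hmain]
end

section
/- Let n ≥ 1 and 1 ≤ i ≤ j ≤ n, and write μ_k = k/(n+1). Then Cov[ (U_(i) − μ_i)², (U_(j) − μ_j)² ] = 2μ_i²(1−μ_j)²/((n+2)(n+3)) + (μ_i(1−μ_j)/((n+2)(n+3))) · ( 3(1−3μ_i)(2−3μ_j)/(n+4) − (1−μ_i)μ_j/(n+2) ), where Cov[X,Y] = E[XY] − E[X]E[Y] and the expectations are taken over the order statistics of n i.i.d. uniform random variables on [0,1]. -/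
open MeasureTheory

/-- The `k`-th order statistic (0-based) of the tuple `x : Fin n → ℝ`, i.e. the `k`-th
value of the increasing rearrangement of `x`. -/
noncomputable def ordStat {n : ℕ} (x : Fin n → ℝ) (k : Fin n) : ℝ := x (Tuple.sort x k)

/-- The uniform distribution on the cube `[0,1]^n`: the product of `n` copies of
Lebesgue measure restricted to `[0,1]`. -/
noncomputable def unifCube (n : ℕ) : Measure (Fin n → ℝ) :=
  Measure.pi fun _ => volume.restrict (Set.Icc (0:ℝ) 1)

open Finset

set_option maxHeartbeats 1000000

lemma ordStat_eq_of_monotone {n : ℕ} (x : Fin n → ℝ) (σ : Equiv.Perm (Fin n))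
    (h : Monotone (x ∘ σ)) : ordStat x = x ∘ σ := by
  have := Tuple.unique_monotone (f := x) (σ := Tuple.sort x) (τ := σ)
    (Tuple.monotone_sort x) h
  funext k
  exact congrFun this k

lemma ordStat_comp_perm {n : ℕ} (x : Fin n → ℝ) (σ : Equiv.Perm (Fin n)) :
    ordStat (x ∘ σ) = ordStat x := by
  funext k
  have h := Tuple.comp_perm_comp_sort_eq_comp_sort (f := x) (σ := σ)
  exact congrFun h k

lemma monotone_ordStat {n : ℕ} (x : Fin n → ℝ) : Monotone (ordStat x) :=
  Tuple.monotone_sort x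

lemma ordStat_mem_range {n : ℕ} (x : Fin n → ℝ) (k : Fin n) :
    ∃ m, ordStat x k = x m := ⟨Tuple.sort x k, rfl⟩

lemma ordStat_smul {n : ℕ} (x : Fin n → ℝ) {c : ℝ} (hc : 0 ≤ c) :
    ordStat (c • x) = c • ordStat x := by
  have h : Monotone ((c • x) ∘ Tuple.sort x) := by
    intro a b hab
    simp only [Function.comp_apply, Pi.smul_apply, smul_eq_mul]
    exact mul_le_mul_of_nonneg_left (Tuple.monotone_sort x hab) hc
  rw [ordStat_eq_of_monotone _ _ h]
  rfl

lemma ordStat_le_iff {n : ℕ} (x : Fin n → ℝ) (k : Fin n) (t : ℝ) :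
    ordStat x k ≤ t ↔ (k : ℕ) < Fintype.card {m // x m ≤ t} := by
  classical
  have h := Tuple.lt_card_le_iff_apply_le_of_monotone (f := x ∘ Tuple.sort x) (a := t)
    (j := k) (Tuple.monotone_sort x)
  have hcard : Fintype.card {i // (x ∘ Tuple.sort x) i ≤ t} = Fintype.card {m // x m ≤ t} :=
    Fintype.card_congr ((Tuple.sort x).subtypeEquiv (fun a => Iff.rfl))
  rw [Fintype.card_subtype, Fintype.card_subtype] at hcard
  rw [hcard] at h
  rw [Fintype.card_subtype]
  exact h.symm

lemma measurable_ordStat {n : ℕ} (k : Fin n) : Measurable (fun x : Fin n → ℝ => ordStat x k) := by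
  classical
  apply measurable_of_Iic
  intro t
  have : (fun x : Fin n → ℝ => ordStat x k) ⁻¹' Set.Iic t
      = {x : Fin n → ℝ | (k:ℕ) < ∑ m : Fin n, if x m ≤ t then 1 else 0} := by
    ext x
    simp only [Set.mem_preimage, Set.mem_Iic, Set.mem_setOf_eq, ordStat_le_iff,
      Fintype.card_subtype, Finset.card_eq_sum_ones]
    rw [Finset.sum_filter]
  rw [this]
  have hm : Measurable (fun x : Fin n → ℝ => ∑ m : Fin n, if x m ≤ t then (1:ℕ) else 0) := by
    apply Finset.measurable_sum
    intro m _
    exact Measurable.ite (measurableSet_le (measurable_pi_apply m) measurable_const)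
      measurable_const measurable_const
  exact measurableSet_lt measurable_const hm

-- permutation extension

def extPerm {n : ℕ} (σ : Equiv.Perm (Fin n)) : Equiv.Perm (Fin (n+1)) where
  toFun := Fin.lastCases (Fin.last n) (fun k => (σ k).castSucc)
  invFun := Fin.lastCases (Fin.last n) (fun k => (σ.symm k).castSucc)
  left_inv := by
    intro a
    induction a using Fin.lastCases with
    | last => simp
    | cast k => simp
  right_inv := by
    intro a
    induction a using Fin.lastCases with
    | last => simp
    | cast k => simp

@[simp] lemma extPerm_last {n : ℕ} (σ : Equiv.Perm (Fin n)) :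
    extPerm σ (Fin.last n) = Fin.last n := by
  simp only [extPerm, Equiv.coe_fn_mk, Fin.lastCases_last]

@[simp] lemma extPerm_castSucc {n : ℕ} (σ : Equiv.Perm (Fin n)) (k : Fin n) :
    extPerm σ (Fin.castSucc k) = (σ k).castSucc := by
  simp only [extPerm, Equiv.coe_fn_mk, Fin.lastCases_castSucc]

lemma monotone_snoc {n : ℕ} {g : Fin n → ℝ} {t : ℝ} (hg : Monotone g)
    (ht : ∀ k, g k ≤ t) : Monotone (Fin.snoc g t : Fin (n+1) → ℝ) := by
  intro a b hab
  induction b using Fin.lastCases with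
  | last =>
    induction a using Fin.lastCases with
    | last => simp
    | cast a' => simp only [Fin.snoc_castSucc, Fin.snoc_last]; exact ht a'
  | cast b' =>
    induction a using Fin.lastCases with
    | last =>
      exact absurd hab (Fin.not_le.mpr (Fin.castSucc_lt_last b'))
    | cast a' =>
      simp only [Fin.snoc_castSucc]
      exact hg (Fin.castSucc_le_castSucc_iff.mp hab)

lemma ordStat_snoc {n : ℕ} (y : Fin n → ℝ) (t : ℝ) (h : ∀ m, y m ≤ t) :
    ordStat (Fin.snoc y t) = Fin.snoc (ordStat y) t := by
  have hmono : Monotone ((Fin.snoc y t : Fin (n+1) → ℝ) ∘ (extPerm (Tuple.sort y))) := by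
    have hcomp : (Fin.snoc y t : Fin (n+1) → ℝ) ∘ (extPerm (Tuple.sort y))
        = Fin.snoc (y ∘ Tuple.sort y) t := by
      funext a
      induction a using Fin.lastCases with
      | last => simp only [Function.comp_apply, extPerm_last, Fin.snoc_last]
      | cast k => simp only [Function.comp_apply, extPerm_castSucc, Fin.snoc_castSucc]
    rw [hcomp]
    exact monotone_snoc (Tuple.monotone_sort y) (fun k => h _)
  rw [ordStat_eq_of_monotone _ _ hmono]
  funext a
  induction a using Fin.lastCases with
  | last => simp only [Function.comp_apply, extPerm_last, Fin.snoc_last]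
  | cast k =>
    simp only [Function.comp_apply, extPerm_castSucc, Fin.snoc_castSucc]
    rfl

instance unifCube_prob (n : ℕ) : IsProbabilityMeasure (unifCube n) := by
  have : IsProbabilityMeasure (volume.restrict (Set.Icc (0:ℝ) 1)) := by
    constructor
    rw [Measure.restrict_apply_univ, Real.volume_Icc]
    norm_num
  exact Measure.pi.instIsProbabilityMeasure _

lemma unifCube_eq_restrict (n : ℕ) :
    unifCube n = volume.restrict (Set.univ.pi fun _ : Fin n => Set.Icc (0:ℝ) 1) := by
  refine Measure.pi_eq (fun s hs => ?_)
  rw [Measure.restrict_apply (MeasurableSet.univ_pi hs)]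
  have : (Set.univ.pi s) ∩ (Set.univ.pi fun _ : Fin n => Set.Icc (0:ℝ) 1)
      = Set.univ.pi (fun i => s i ∩ Set.Icc (0:ℝ) 1) := by
    rw [← Set.pi_inter_distrib]
  rw [this, volume_pi_pi]
  exact Finset.prod_congr rfl (fun i _ => (Measure.restrict_apply (hs i)).symm)

lemma unifCube_singleton_coord_null (n : ℕ) (k : Fin n) (c : ℝ) :
    unifCube n {y : Fin n → ℝ | y k = c} = 0 := by
  classical
  have hset : {y : Fin n → ℝ | y k = c}
      = Set.univ.pi (fun m => if m = k then {c} else Set.univ) := by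
    ext y
    simp only [Set.mem_setOf_eq, Set.mem_pi, Set.mem_univ, true_implies]
    constructor
    · intro h m
      by_cases hm : m = k <;> simp [hm, h]
    · intro h
      have := h k
      simpa using this
  rw [hset, unifCube, Measure.pi_pi]
  refine Finset.prod_eq_zero (Finset.mem_univ k) ?_
  simp [Measure.restrict_apply]

lemma unifCube_eq_coords_null (n : ℕ) {a b : Fin (n+1)} (hab : a ≠ b) :
    unifCube (n+1) {x : Fin (n+1) → ℝ | x a = x b} = 0 := by
  obtain ⟨b', hb'⟩ := Fin.exists_succAbove_eq (Ne.symm hab)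
  have hmp := measurePreserving_piFinSuccAbove
    (fun _ : Fin (n+1) => volume.restrict (Set.Icc (0:ℝ) 1)) a
  set e := MeasurableEquiv.piFinSuccAbove (fun _ : Fin (n+1) => ℝ) a
  have hA : MeasurableSet {p : ℝ × (Fin n → ℝ) | p.1 = p.2 b'} :=
    measurableSet_eq_fun measurable_fst ((measurable_pi_apply b').comp measurable_snd)
  have hpre : {x : Fin (n+1) → ℝ | x a = x b} = e ⁻¹' {p | p.1 = p.2 b'} := by
    ext x
    simp only [Set.mem_preimage, Set.mem_setOf_eq, e, MeasurableEquiv.piFinSuccAbove_apply]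
    rw [← hb']
    rfl
  rw [hpre, unifCube, MeasureTheory.MeasurePreserving.measure_preimage hmp hA.nullMeasurableSet]
  rw [Measure.measure_prod_null hA]
  refine Filter.Eventually.of_forall (fun t => ?_)
  have : (Prod.mk t ⁻¹' {p : ℝ × (Fin n → ℝ) | p.1 = p.2 b'}) = {y : Fin n → ℝ | y b' = t} := by
    ext y; simp [eq_comm]
  show (Measure.pi fun _ : Fin n => volume.restrict (Set.Icc (0:ℝ) 1))
      (Prod.mk t ⁻¹' {p : ℝ × (Fin n → ℝ) | p.1 = p.2 b'}) = 0
  rw [this]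
  exact unifCube_singleton_coord_null n b' t

lemma measurePreserving_comp_perm (n : ℕ) (σ : Equiv.Perm (Fin n)) :
    MeasurePreserving (fun x : Fin n → ℝ => x ∘ σ) (unifCube n) (unifCube n) := by
  have h := measurePreserving_piCongrLeft
    (fun _ : Fin n => volume.restrict (Set.Icc (0:ℝ) 1)) σ.symm
  have heq : ⇑(MeasurableEquiv.piCongrLeft (fun _ : Fin n => ℝ) σ.symm)
      = fun x : Fin n → ℝ => x ∘ σ := by
    funext x
    funext k
    simp [MeasurableEquiv.piCongrLeft, Equiv.piCongrLeft, Equiv.piCongrLeft']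
  rw [heq] at h
  exact h

/-- the set where coordinate `m` is the strict max -/

def strictMaxAt {n : ℕ} (m : Fin n) : Set (Fin n → ℝ) := {x | ∀ k, k ≠ m → x k < x m}

lemma measurableSet_strictMaxAt {n : ℕ} (m : Fin n) : MeasurableSet (strictMaxAt m) := by
  have : strictMaxAt m = ⋂ k, ⋂ (_ : k ≠ m), {x : Fin n → ℝ | x k < x m} := by
    ext x; simp [strictMaxAt]
  rw [this]
  exact MeasurableSet.iInter fun k => MeasurableSet.iInter fun _ =>
    measurableSet_lt (measurable_pi_apply k) (measurable_pi_apply m)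

lemma strictMaxAt_disjoint {n : ℕ} {a b : Fin n} (hab : a ≠ b) :
    Disjoint (strictMaxAt a) (strictMaxAt b) := by
  rw [Set.disjoint_left]
  rintro x hxa hxb
  exact absurd (lt_trans (hxa b (Ne.symm hab)) (hxb a hab)) (lt_irrefl _)

lemma compl_iUnion_strictMaxAt_null (n : ℕ) :
    unifCube (n+1) (⋃ m, strictMaxAt m)ᶜ = 0 := by
  have hsub : (⋃ m, strictMaxAt (n := n+1) m)ᶜ
      ⊆ ⋃ (a : Fin (n+1)), ⋃ (b : Fin (n+1)), ⋃ (_ : a ≠ b), {x | x a = x b} := by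
    intro x hx
    simp only [Set.mem_compl_iff, Set.mem_iUnion, not_exists] at hx
    obtain ⟨m, -, hm⟩ := Finset.exists_max_image Finset.univ x ⟨0, Finset.mem_univ 0⟩
    have : ¬ (∀ k, k ≠ m → x k < x m) := hx m
    push_neg at this
    obtain ⟨k, hk, hle⟩ := this
    have : x k = x m := le_antisymm (hm k (Finset.mem_univ k)) hle
    simp only [Set.mem_iUnion]
    exact ⟨k, m, hk, this⟩
  refine measure_mono_null hsub ?_
  refine measure_iUnion_null fun a => measure_iUnion_null fun b => ?_
  by_cases hab : a = b
  · simp [hab]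
  · simpa [hab] using unifCube_eq_coords_null n hab

lemma measurableEmbedding_comp_perm (n : ℕ) (σ : Equiv.Perm (Fin n)) :
    MeasurableEmbedding (fun x : Fin n → ℝ => x ∘ σ) := by
  have heq : ⇑(MeasurableEquiv.piCongrLeft (fun _ : Fin n => ℝ) σ.symm)
      = fun x : Fin n → ℝ => x ∘ σ := by
    funext x; funext k
    simp [MeasurableEquiv.piCongrLeft, Equiv.piCongrLeft, Equiv.piCongrLeft']
  rw [← heq]
  exact (MeasurableEquiv.piCongrLeft (fun _ : Fin n => ℝ) σ.symm).measurableEmbedding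

lemma extract_max (n : ℕ) (f : (Fin (n+1) → ℝ) → ℝ) (hf : Measurable f)
    (hsymm : ∀ (σ : Equiv.Perm (Fin (n+1))) (x : Fin (n+1) → ℝ), f (x ∘ σ) = f x)
    (hint : Integrable f (unifCube (n+1))) :
    ∫ x, f x ∂unifCube (n+1)
      = ((n:ℝ)+1) * ∫ t in Set.Icc (0:ℝ) 1,
          (∫ y, Set.indicator {y : Fin n → ℝ | ∀ k, y k ≤ t}
            (fun y => f (Fin.snoc y t)) y ∂unifCube n) ∂volume := by
  classical
  -- Step 1: restrict to the union of strict-max sets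
  have h1 : ∫ x, f x ∂unifCube (n+1) = ∑ m : Fin (n+1), ∫ x in strictMaxAt m, f x ∂unifCube (n+1) := by
    rw [← setIntegral_univ (f := f) (μ := unifCube (n+1)),
      setIntegral_congr_set (t := ⋃ m, strictMaxAt m)
        (by rw [MeasureTheory.ae_eq_set]; constructor
            · refine measure_mono_null ?_ (compl_iUnion_strictMaxAt_null n)
              intro x hx; exact hx.2
            · simp),
      integral_iUnion_fintype (fun m => measurableSet_strictMaxAt m)
        (fun a b hab => strictMaxAt_disjoint hab)
        (fun m => hint.integrableOn)]
  -- Step 2: each term equals the one for the last coordinate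
  have h2 : ∀ m : Fin (n+1), ∫ x in strictMaxAt m, f x ∂unifCube (n+1)
      = ∫ x in strictMaxAt (Fin.last n), f x ∂unifCube (n+1) := by
    intro m
    set σ : Equiv.Perm (Fin (n+1)) := Equiv.swap (Fin.last n) m with hσ
    have hlast : σ m = Fin.last n := Equiv.swap_apply_right _ _
    have hpre : (fun x : Fin (n+1) → ℝ => x ∘ σ) ⁻¹' (strictMaxAt m) = strictMaxAt (Fin.last n) := by
      ext x
      simp only [Set.mem_preimage, strictMaxAt, Set.mem_setOf_eq, Function.comp_apply]
      constructor
      · intro h k hk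
        have h1 : σ.symm k ≠ m := by
          intro hc
          exact hk (((Equiv.symm_apply_eq σ).mp hc).trans hlast)
        have h2 := h (σ.symm k) h1
        rwa [Equiv.apply_symm_apply, hlast] at h2
      · intro h k hk
        rw [hlast]
        exact h (σ k) (fun hc => hk (σ.injective (hc.trans hlast.symm)))
    calc ∫ x in strictMaxAt m, f x ∂unifCube (n+1)
        = ∫ x in (fun x : Fin (n+1) → ℝ => x ∘ σ) ⁻¹' (strictMaxAt m), f ((fun x => x ∘ σ) x) ∂unifCube (n+1) := by
          rw [MeasurePreserving.setIntegral_preimage_emb (measurePreserving_comp_perm (n+1) σ)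
            (measurableEmbedding_comp_perm (n+1) σ) f (strictMaxAt m)]
      _ = ∫ x in strictMaxAt (Fin.last n), f x ∂unifCube (n+1) := by
          rw [hpre]
          exact setIntegral_congr_fun (measurableSet_strictMaxAt _) (fun x _ => hsymm σ x)
  -- Step 3: sum
  have h3 : ∫ x, f x ∂unifCube (n+1)
      = ((n:ℝ)+1) * ∫ x in strictMaxAt (Fin.last n), f x ∂unifCube (n+1) := by
    rw [h1]
    rw [Finset.sum_congr rfl (fun m _ => h2 m), Finset.sum_const, Finset.card_univ,
      Fintype.card_fin, nsmul_eq_mul]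
    push_cast
    ring
  rw [h3]
  congr 1
  -- Step 4: transfer to the product via piFinSuccAbove at `last`
  set e := MeasurableEquiv.piFinSuccAbove (fun _ : Fin (n+1) => ℝ) (Fin.last n) with he
  have hmp := measurePreserving_piFinSuccAbove
    (fun _ : Fin (n+1) => volume.restrict (Set.Icc (0:ℝ) 1)) (Fin.last n)
  set ρ := ((volume.restrict (Set.Icc (0:ℝ) 1)).prod (unifCube n)) with hρ
  have hmp' : MeasurePreserving (⇑e) (unifCube (n+1)) ρ := hmp
  set g : ℝ × (Fin n → ℝ) → ℝ :=
    fun p => Set.indicator {p : ℝ × (Fin n → ℝ) | ∀ k, p.2 k < p.1}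
      (fun p => f (Fin.snoc p.2 p.1)) p with hg
  have hcomp : ∀ x : Fin (n+1) → ℝ, g (e x) = Set.indicator (strictMaxAt (Fin.last n)) f x := by
    intro x
    have hex : e x = (x (Fin.last n), fun k => x ((Fin.last n).succAbove k)) := rfl
    have hsnoc : Fin.snoc (fun k : Fin n => x ((Fin.last n).succAbove k)) (x (Fin.last n)) = x := by
      have : (fun k : Fin n => x ((Fin.last n).succAbove k)) = Fin.init x := by
        funext k; simp [Fin.init, Fin.succAbove_last_apply]
      rw [this, Fin.snoc_init_self]
    have hmem : (e x ∈ {p : ℝ × (Fin n → ℝ) | ∀ k, p.2 k < p.1}) ↔ x ∈ strictMaxAt (Fin.last n) := by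
      rw [hex]
      simp only [Set.mem_setOf_eq, strictMaxAt, Fin.succAbove_last_apply]
      constructor
      · intro h k hk
        obtain ⟨k', rfl⟩ := Fin.exists_castSucc_eq.mpr hk
        exact h k'
      · intro h k
        exact h _ (Fin.castSucc_lt_last k).ne
    by_cases hx : x ∈ strictMaxAt (Fin.last n)
    · calc g (e x) = f (Fin.snoc (e x).2 (e x).1) := Set.indicator_of_mem (hmem.mpr hx) _
        _ = f x := by rw [hex]; exact congrArg f hsnoc
        _ = (strictMaxAt (Fin.last n)).indicator f x := (Set.indicator_of_mem hx f).symm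
    · calc g (e x) = 0 := Set.indicator_of_notMem (fun hc => hx (hmem.mp hc)) _
        _ = (strictMaxAt (Fin.last n)).indicator f x := (Set.indicator_of_notMem hx f).symm
  have hInd : Integrable (Set.indicator (strictMaxAt (Fin.last n)) f) (unifCube (n+1)) :=
    hint.indicator (measurableSet_strictMaxAt _)
  have hIg : Integrable g ρ := by
    rw [← MeasurePreserving.integrable_comp_emb hmp' e.measurableEmbedding]
    have : g ∘ ⇑e = Set.indicator (strictMaxAt (Fin.last n)) f := funext hcomp
    rw [this]
    exact hInd
  have h4 : ∫ x in strictMaxAt (Fin.last n), f x ∂unifCube (n+1) = ∫ p, g p ∂ρ := by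
    rw [← integral_indicator (measurableSet_strictMaxAt _)]
    calc ∫ x, Set.indicator (strictMaxAt (Fin.last n)) f x ∂unifCube (n+1)
        = ∫ x, g (e x) ∂unifCube (n+1) := by
          exact integral_congr_ae (Filter.Eventually.of_forall (fun x => (hcomp x).symm))
      _ = ∫ p, g p ∂ρ := MeasurePreserving.integral_comp' hmp' g
  rw [h4, hρ, MeasureTheory.integral_prod g hIg]
  -- Step 5: inner integrals, replace strict by non-strict
  refine integral_congr_ae (Filter.Eventually.of_forall (fun t => ?_))
  have hnull : unifCube n (⋃ k, {y : Fin n → ℝ | y k = t}) = 0 :=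
    measure_iUnion_null fun k => unifCube_singleton_coord_null n k t
  refine integral_congr_ae ?_
  have hae : ∀ᵐ y ∂unifCube n, y ∉ ⋃ k, {y : Fin n → ℝ | y k = t} :=
    measure_eq_zero_iff_ae_notMem.mp hnull
  filter_upwards [hae] with y hy
  simp only [Set.mem_iUnion, Set.mem_setOf_eq, not_exists] at hy
  by_cases h1 : ∀ k, y k < t
  · have hmem1 : (t, y) ∈ {p : ℝ × (Fin n → ℝ) | ∀ k, p.2 k < p.1} := h1
    have hmem2 : y ∈ {y : Fin n → ℝ | ∀ k, y k ≤ t} := fun k => (h1 k).le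
    calc g (t,y) = f (Fin.snoc y t) := Set.indicator_of_mem hmem1 _
      _ = _ := (Set.indicator_of_mem hmem2 (fun y => f (Fin.snoc y t))).symm
  · have hmem1 : (t, y) ∉ {p : ℝ × (Fin n → ℝ) | ∀ k, p.2 k < p.1} := h1
    have hmem2 : y ∉ {y : Fin n → ℝ | ∀ k, y k ≤ t} := by
      intro hc
      push_neg at h1
      obtain ⟨k0, hk0⟩ := h1
      exact (hy k0) (le_antisymm (hc k0) hk0)
    calc g (t,y) = 0 := Set.indicator_of_notMem hmem1 _
      _ = _ := (Set.indicator_of_notMem hmem2 (fun y => f (Fin.snoc y t))).symm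

lemma measurable_mono {n : ℕ} (i j : Fin n) (p q : ℕ) :
    Measurable (fun y : Fin n → ℝ => ordStat y i ^ p * ordStat y j ^ q) :=
  ((measurable_ordStat i).pow_const p).mul ((measurable_ordStat j).pow_const q)

lemma abs_mono_le_one {n : ℕ} {y : Fin n → ℝ} (hy : ∀ m, y m ∈ Set.Icc (0:ℝ) 1)
    (i j : Fin n) (p q : ℕ) : |ordStat y i ^ p * ordStat y j ^ q| ≤ 1 := by
  obtain ⟨mi, hmi⟩ := ordStat_mem_range y i
  obtain ⟨mj, hmj⟩ := ordStat_mem_range y j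
  rw [abs_mul, abs_pow, abs_pow, hmi, hmj]
  have h1 : |y mi| ≤ 1 := abs_le.mpr ⟨by linarith [(hy mi).1], (hy mi).2⟩
  have h2 : |y mj| ≤ 1 := abs_le.mpr ⟨by linarith [(hy mj).1], (hy mj).2⟩
  calc |y mi| ^ p * |y mj| ^ q ≤ 1 ^ p * 1 ^ q := by
        exact mul_le_mul (pow_le_pow_left₀ (abs_nonneg _) h1 p)
          (pow_le_pow_left₀ (abs_nonneg _) h2 q) (pow_nonneg (abs_nonneg _) q)
          (by positivity)
    _ = 1 := by norm_num

lemma ae_mem_box {n : ℕ} : ∀ᵐ y ∂unifCube n, ∀ m, y m ∈ Set.Icc (0:ℝ) 1 := by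
  rw [unifCube_eq_restrict]
  filter_upwards [ae_restrict_mem (MeasurableSet.univ_pi fun _ => measurableSet_Icc)] with y hy
  intro m
  exact hy m (Set.mem_univ m)

lemma integrable_mono {n : ℕ} (i j : Fin n) (p q : ℕ) :
    Integrable (fun y : Fin n → ℝ => ordStat y i ^ p * ordStat y j ^ q) (unifCube n) := by
  refine Integrable.mono' (integrable_const 1) (measurable_mono i j p q).aestronglyMeasurable ?_
  filter_upwards [ae_mem_box] with y hy
  have h := abs_mono_le_one hy i j p q
  rw [abs_mul, abs_pow, abs_pow] at h
  simpa [Real.norm_eq_abs, abs_mul, abs_pow] using h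

lemma box_moment {n : ℕ} (i j : Fin n) (p q : ℕ) {t : ℝ} (ht : t ∈ Set.Icc (0:ℝ) 1) :
    ∫ y, Set.indicator {y : Fin n → ℝ | ∀ k, y k ≤ t}
        (fun y => ordStat y i ^ p * ordStat y j ^ q) y ∂unifCube n
      = t ^ (n + p + q) * ∫ y, ordStat y i ^ p * ordStat y j ^ q ∂unifCube n := by
  set G := fun y : Fin n → ℝ => ordStat y i ^ p * ordStat y j ^ q with hG
  have hS : MeasurableSet {y : Fin n → ℝ | ∀ k, y k ≤ t} := by
    have : {y : Fin n → ℝ | ∀ k, y k ≤ t} = ⋂ k, {y : Fin n → ℝ | y k ≤ t} := by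
      ext y; simp
    rw [this]
    exact MeasurableSet.iInter fun k =>
      measurableSet_le (measurable_pi_apply k) measurable_const
  have hbox0t : MeasurableSet (Set.univ.pi fun _ : Fin n => Set.Icc (0:ℝ) t) :=
    MeasurableSet.univ_pi fun _ => measurableSet_Icc
  have hinter : {y : Fin n → ℝ | ∀ k, y k ≤ t} ∩ (Set.univ.pi fun _ : Fin n => Set.Icc (0:ℝ) 1)
      = Set.univ.pi fun _ : Fin n => Set.Icc (0:ℝ) t := by
    ext y
    simp only [Set.mem_inter_iff, Set.mem_setOf_eq, Set.mem_pi, Set.mem_univ, true_implies,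
      Set.mem_Icc]
    constructor
    · rintro ⟨h1, h2⟩ k; exact ⟨(h2 k).1, h1 k⟩
    · intro h; exact ⟨fun k => (h k).2, fun k => ⟨(h k).1, le_trans (h k).2 ht.2⟩⟩
  have hstep1 : ∫ y, Set.indicator {y : Fin n → ℝ | ∀ k, y k ≤ t} G y ∂unifCube n
      = ∫ y in (Set.univ.pi fun _ : Fin n => Set.Icc (0:ℝ) t), G y ∂volume := by
    rw [integral_indicator hS, unifCube_eq_restrict, Measure.restrict_restrict hS, hinter]
  rw [hstep1]
  rcases eq_or_lt_of_le ht.1 with h0 | h0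
  · -- t = 0
    rw [← h0]
    have hzero : volume (Set.univ.pi fun _ : Fin n => Set.Icc (0:ℝ) 0) = 0 := by
      rw [volume_pi_pi]
      refine Finset.prod_eq_zero (Finset.mem_univ i) ?_
      simp
    rw [Measure.restrict_eq_zero.mpr hzero, integral_zero_measure]
    rw [zero_pow (by have := i.pos; omega), zero_mul]
  · -- 0 < t
    rw [← integral_indicator hbox0t]
    set H := Set.indicator (Set.univ.pi fun _ : Fin n => Set.Icc (0:ℝ) t) G with hH
    have hcs := MeasureTheory.Measure.integral_comp_smul (volume : Measure (Fin n → ℝ)) H t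
    have hrank : Module.finrank ℝ (Fin n → ℝ) = n := by
      simp [Module.finrank_pi]
    rw [hrank] at hcs
    have habs : |(t ^ n)⁻¹| = (t ^ n)⁻¹ := abs_of_pos (by positivity)
    have hHsmul : ∀ x : Fin n → ℝ, H (t • x)
        = Set.indicator (Set.univ.pi fun _ : Fin n => Set.Icc (0:ℝ) 1)
            (fun x => t ^ (p + q) * G x) x := by
      intro x
      have hmem : (t • x ∈ Set.univ.pi fun _ : Fin n => Set.Icc (0:ℝ) t)
          ↔ x ∈ (Set.univ.pi fun _ : Fin n => Set.Icc (0:ℝ) 1) := by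
        simp only [Set.mem_pi, Set.mem_univ, true_implies, Set.mem_Icc, Pi.smul_apply,
          smul_eq_mul]
        constructor
        · intro h k
          have h1 := (h k).1
          have h2 := (h k).2
          constructor
          · nlinarith
          · nlinarith
        · intro h k
          have h1 := (h k).1
          have h2 := (h k).2
          exact ⟨mul_nonneg h0.le h1, by nlinarith⟩
      have hGsmul : G (t • x) = t ^ (p + q) * G x := by
        rw [hG]
        simp only [ordStat_smul _ h0.le, Pi.smul_apply, smul_eq_mul]
        ring
      rw [hH]
      by_cases hx : x ∈ (Set.univ.pi fun _ : Fin n => Set.Icc (0:ℝ) 1)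
      · rw [Set.indicator_of_mem (hmem.mpr hx) G, Set.indicator_of_mem hx, hGsmul]
      · rw [Set.indicator_of_notMem (fun hc => hx (hmem.mp hc)) G,
          Set.indicator_of_notMem hx]
    have hright : ∫ x, H (t • x) ∂(volume : Measure (Fin n → ℝ))
        = t ^ (p + q) * ∫ y, G y ∂unifCube n := by
      rw [integral_congr_ae (Filter.Eventually.of_forall hHsmul)]
      rw [integral_indicator (MeasurableSet.univ_pi fun _ => measurableSet_Icc)]
      rw [MeasureTheory.integral_const_mul]
      rw [unifCube_eq_restrict]
    have ht' : (t:ℝ) ^ n ≠ 0 := by positivity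
    have key : (t ^ n)⁻¹ * ∫ x, H x ∂(volume : Measure (Fin n → ℝ))
        = t ^ (p + q) * ∫ y, G y ∂unifCube n := by
      rw [← hright, hcs, habs, smul_eq_mul]
    rw [inv_mul_eq_iff_eq_mul₀ ht'] at key
    rw [key, ← mul_assoc, ← pow_add, ← Nat.add_assoc]

noncomputable def momF (n i j p q : ℕ) : ℝ :=
  (∏ r ∈ Finset.range p, ((i:ℝ)+1+r)/((n:ℝ)+1+r)) *
  (∏ s ∈ Finset.range q, ((j:ℝ)+1+p+s)/((n:ℝ)+1+p+s))

lemma div_split (x b c : ℝ) (hb : b ≠ 0) : x / c = x / b * (b / c) := by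
  rw [div_mul_div_comm, mul_comm x b, mul_div_mul_left _ _ hb]

lemma tele (a : ℝ) (ha : 0 < a) (m : ℕ) :
    ∏ r ∈ Finset.range m, (a + r)/(a + 1 + r) = a/(a + m) := by
  induction m with
  | zero => simp [div_self ha.ne']
  | succ m ih =>
    rw [Finset.prod_range_succ, ih]
    have h1 : a + (m:ℝ) ≠ 0 := by positivity
    rw [div_mul_div_comm, mul_comm a (a + (m:ℝ)), mul_div_mul_left _ _ h1]
    push_cast
    ring_nf

lemma tele' (n p q : ℕ) :
    (∏ r ∈ Finset.range p, ((n:ℝ)+1+r)/((n:ℝ)+2+r)) *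
      (∏ s ∈ Finset.range q, ((n:ℝ)+1+p+s)/((n:ℝ)+2+p+s))
    = ((n:ℝ)+1)/((n:ℝ)+1+p+q) := by
  have hadd := Finset.prod_range_add
    (fun r : ℕ => ((n:ℝ)+1+r)/((n:ℝ)+2+r)) p q
  have hc : ∀ s ∈ Finset.range q, ((n:ℝ)+1+((p+s:ℕ):ℝ))/((n:ℝ)+2+((p+s:ℕ):ℝ))
      = ((n:ℝ)+1+p+s)/((n:ℝ)+2+p+s) := by
    intro s _
    push_cast
    ring_nf
  rw [Finset.prod_congr rfl hc] at hadd
  rw [← hadd]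
  have hterm : ∀ r ∈ Finset.range (p+q), ((n:ℝ)+1+r)/((n:ℝ)+2+r)
      = (((n:ℝ)+1)+r)/(((n:ℝ)+1)+1+r) := by
    intro r _
    ring_nf
  rw [Finset.prod_congr rfl hterm, tele ((n:ℝ)+1) (by positivity) (p+q)]
  push_cast
  ring_nf

lemma momF_rec (n i j p q : ℕ) :
    momF (n+1) i j p q = (((n:ℝ)+1)/((n:ℝ)+1+p+q)) * momF n i j p q := by
  have h1 : (∏ r ∈ Finset.range p, ((i:ℝ)+1+r)/(((n+1:ℕ):ℝ)+1+r))
      = (∏ r ∈ Finset.range p, ((i:ℝ)+1+r)/((n:ℝ)+1+r)) *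
        (∏ r ∈ Finset.range p, ((n:ℝ)+1+r)/((n:ℝ)+2+r)) := by
    rw [← Finset.prod_mul_distrib]
    refine Finset.prod_congr rfl (fun r _ => ?_)
    have hc : ((n+1:ℕ):ℝ)+1+r = (n:ℝ)+2+r := by push_cast; ring
    rw [hc]
    exact div_split _ _ _ (by positivity)
  have h2 : (∏ s ∈ Finset.range q, ((j:ℝ)+1+p+s)/(((n+1:ℕ):ℝ)+1+p+s))
      = (∏ s ∈ Finset.range q, ((j:ℝ)+1+p+s)/((n:ℝ)+1+p+s)) *
        (∏ s ∈ Finset.range q, ((n:ℝ)+1+p+s)/((n:ℝ)+2+p+s)) := by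
    rw [← Finset.prod_mul_distrib]
    refine Finset.prod_congr rfl (fun s _ => ?_)
    have hc : ((n+1:ℕ):ℝ)+1+p+s = (n:ℝ)+2+p+s := by push_cast; ring
    rw [hc]
    exact div_split _ _ _ (by positivity)
  simp only [momF]
  rw [h1, h2, mul_mul_mul_comm, tele']
  ring

lemma momF_marg (n i p : ℕ) :
    momF n i i p 0 = ∏ r ∈ Finset.range p, ((i:ℝ)+1+r)/((n:ℝ)+1+r) := by
  simp [momF]

lemma momF_rec_last (n i p q : ℕ) :
    momF (n+1) i n p q = (((n:ℝ)+1)/((n:ℝ)+1+p+q)) * momF n i i p 0 := by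
  rw [momF_marg]
  simp only [momF]
  have h1 : (∏ r ∈ Finset.range p, ((i:ℝ)+1+r)/(((n+1:ℕ):ℝ)+1+r))
      = (∏ r ∈ Finset.range p, ((i:ℝ)+1+r)/((n:ℝ)+1+r)) *
        (∏ r ∈ Finset.range p, (((n:ℝ)+1)+r)/(((n:ℝ)+1)+1+r)) := by
    rw [← Finset.prod_mul_distrib]
    refine Finset.prod_congr rfl (fun r _ => ?_)
    have hc : ((n+1:ℕ):ℝ)+1+r = (n:ℝ)+2+r := by push_cast; ring
    rw [hc]
    rw [div_split ((i:ℝ)+1+r) ((n:ℝ)+1+r) ((n:ℝ)+2+r) (by positivity)]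
    congr 1
    ring_nf
  have h2 : (∏ s ∈ Finset.range q, (((n:ℕ):ℝ)+1+p+s)/(((n+1:ℕ):ℝ)+1+p+s))
      = ∏ s ∈ Finset.range q, ((((n:ℝ)+1+p))+s)/((((n:ℝ)+1+p))+1+s) := by
    refine Finset.prod_congr rfl (fun s _ => ?_)
    have hc : ((n+1:ℕ):ℝ)+1+p+s = ((n:ℝ)+1+p)+1+s := by push_cast; ring
    rw [hc]
  rw [h1, h2, tele ((n:ℝ)+1) (by positivity) p, tele ((n:ℝ)+1+p) (by positivity) q]
  have hz1 : (n:ℝ)+1+p ≠ 0 := by positivity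
  have hz2 : (n:ℝ)+1+(p:ℝ)+(q:ℝ) ≠ 0 := by positivity
  have hz3 : (n:ℝ)+1+((p:ℝ)+(q:ℝ)) ≠ 0 := by positivity
  field_simp

lemma integral_Icc_pow (m : ℕ) :
    ∫ t in Set.Icc (0:ℝ) 1, t ^ m = 1/((m:ℝ)+1) := by
  rw [MeasureTheory.integral_Icc_eq_integral_Ioc,
    ← intervalIntegral.integral_of_le (zero_le_one)]
  rw [integral_pow]
  push_cast
  norm_num

lemma measurableSet_lowerBox {n : ℕ} (t : ℝ) :
    MeasurableSet {y : Fin n → ℝ | ∀ k, y k ≤ t} := by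
  have : {y : Fin n → ℝ | ∀ k, y k ≤ t} = ⋂ k, {y : Fin n → ℝ | y k ≤ t} := by ext y; simp
  rw [this]
  exact MeasurableSet.iInter fun k =>
    measurableSet_le (measurable_pi_apply k) measurable_const

lemma measure_lowerBox {n : ℕ} {t : ℝ} (ht : t ∈ Set.Icc (0:ℝ) 1) :
    unifCube n {y : Fin n → ℝ | ∀ k, y k ≤ t} = ENNReal.ofReal t ^ n := by
  have hset : {y : Fin n → ℝ | ∀ k, y k ≤ t} = Set.univ.pi fun _ : Fin n => Set.Iic t := by
    ext y
    simp only [Set.mem_setOf_eq, Set.mem_pi, Set.mem_univ, true_implies, Set.mem_Iic]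
  rw [hset, unifCube, Measure.pi_pi]
  have : (volume.restrict (Set.Icc (0:ℝ) 1)) (Set.Iic t) = ENNReal.ofReal t := by
    rw [Measure.restrict_apply measurableSet_Iic]
    have : Set.Iic t ∩ Set.Icc (0:ℝ) 1 = Set.Icc 0 t := by
      ext u
      simp only [Set.mem_inter_iff, Set.mem_Iic, Set.mem_Icc]
      constructor
      · rintro ⟨h1, h2, h3⟩; exact ⟨h2, h1⟩
      · rintro ⟨h1, h2⟩; exact ⟨h2, h1, h2.trans ht.2⟩
    rw [this, Real.volume_Icc, sub_zero]
  rw [this, Finset.prod_const, Finset.card_univ, Fintype.card_fin]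

theorem moment : ∀ (n : ℕ) (i j : Fin n), i ≤ j → ∀ (p q : ℕ),
    ∫ x, ordStat x i ^ p * ordStat x j ^ q ∂unifCube n = momF n (i : ℕ) (j : ℕ) p q := by
  intro n
  induction n with
  | zero => intro i; exact i.elim0
  | succ n ih =>
    intro i j hij p q
    rw [extract_max n (fun x => ordStat x i ^ p * ordStat x j ^ q)
      (measurable_mono i j p q)
      (fun σ x => by
        show ordStat (x ∘ ⇑σ) i ^ p * ordStat (x ∘ ⇑σ) j ^ q
          = ordStat x i ^ p * ordStat x j ^ q
        rw [ordStat_comp_perm])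
      (integrable_mono i j p q)]
    by_cases hj : j = Fin.last n
    · by_cases hi : i = Fin.last n
      · -- i = j = last
        subst hi
        have hinner : ∀ t ∈ Set.Icc (0:ℝ) 1,
            (∫ y, Set.indicator {y : Fin n → ℝ | ∀ k, y k ≤ t}
              (fun y => ordStat (Fin.snoc y t) (Fin.last n) ^ p
                * ordStat (Fin.snoc y t) j ^ q) y ∂unifCube n)
            = t ^ (n + p + q) * 1 := by
          intro t ht
          have hcongr : ∀ y ∈ {y : Fin n → ℝ | ∀ k, y k ≤ t},
              ordStat (Fin.snoc y t) (Fin.last n) ^ p * ordStat (Fin.snoc y t) j ^ q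
              = t ^ (p + q) := by
            intro y hy
            rw [hj, ordStat_snoc y t hy, Fin.snoc_last, ← pow_add]
          rw [Set.indicator_congr hcongr,
            integral_indicator_const _ (measurableSet_lowerBox t),
            measureReal_def, measure_lowerBox ht, smul_eq_mul, mul_one,
            ENNReal.toReal_pow, ENNReal.toReal_ofReal ht.1]
          rw [← pow_add]
          ring
        rw [setIntegral_congr_fun measurableSet_Icc hinner]
        simp only [mul_one]
        rw [integral_Icc_pow (n+p+q)]
        rw [hj]
        have : ((Fin.last n : Fin (n+1)) : ℕ) = n := rfl
        rw [this, momF_rec_last n n p q]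
        have h1 : momF n n n p 0 = 1 := by
          rw [momF_marg]
          refine Finset.prod_eq_one (fun r _ => div_self ?_)
          positivity
        rw [h1]
        push_cast
        ring
      · -- i < last = j
        obtain ⟨i', rfl⟩ := Fin.exists_castSucc_eq.mpr hi
        have hinner : ∀ t ∈ Set.Icc (0:ℝ) 1,
            (∫ y, Set.indicator {y : Fin n → ℝ | ∀ k, y k ≤ t}
              (fun y => ordStat (Fin.snoc y t) (Fin.castSucc i') ^ p
                * ordStat (Fin.snoc y t) j ^ q) y ∂unifCube n)
            = t ^ (n + p + q) * momF n (i' : ℕ) (i' : ℕ) p 0 := by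
          intro t ht
          have hcongr : ∀ y ∈ {y : Fin n → ℝ | ∀ k, y k ≤ t},
              ordStat (Fin.snoc y t) (Fin.castSucc i') ^ p * ordStat (Fin.snoc y t) j ^ q
              = t ^ q * (ordStat y i' ^ p * ordStat y i' ^ 0) := by
            intro y hy
            rw [hj, ordStat_snoc y t hy, Fin.snoc_last, Fin.snoc_castSucc]
            ring
          rw [Set.indicator_congr hcongr]
          have hpull : ∀ y : Fin n → ℝ,
              Set.indicator {y : Fin n → ℝ | ∀ k, y k ≤ t}
                (fun y => t ^ q * (ordStat y i' ^ p * ordStat y i' ^ 0)) y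
              = t ^ q * Set.indicator {y : Fin n → ℝ | ∀ k, y k ≤ t}
                (fun y => ordStat y i' ^ p * ordStat y i' ^ 0) y := by
            intro y
            exact Set.indicator_const_mul _ _ _ _
          rw [integral_congr_ae (Filter.Eventually.of_forall hpull),
            MeasureTheory.integral_const_mul, box_moment i' i' p 0 ht,
            ih i' i' le_rfl p 0]
          rw [← mul_assoc, ← pow_add]
          congr 2
          omega
        rw [setIntegral_congr_fun measurableSet_Icc hinner]
        rw [MeasureTheory.integral_mul_const, integral_Icc_pow (n+p+q)]
        rw [hj]
        have hlast : ((Fin.last n : Fin (n+1)) : ℕ) = n := rfl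
        have hcs : ((Fin.castSucc i' : Fin (n+1)) : ℕ) = (i' : ℕ) := rfl
        rw [hlast, hcs, momF_rec_last n (i' : ℕ) p q]
        push_cast
        ring
    · -- j < last, so i < last
      have hi : i ≠ Fin.last n := by
        intro hc
        exact hj (le_antisymm (Fin.le_last j) (hc ▸ hij))
      obtain ⟨i', rfl⟩ := Fin.exists_castSucc_eq.mpr hi
      obtain ⟨j', rfl⟩ := Fin.exists_castSucc_eq.mpr hj
      have hij' : i' ≤ j' := by
        rwa [Fin.castSucc_le_castSucc_iff] at hij
      have hinner : ∀ t ∈ Set.Icc (0:ℝ) 1,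
          (∫ y, Set.indicator {y : Fin n → ℝ | ∀ k, y k ≤ t}
            (fun y => ordStat (Fin.snoc y t) (Fin.castSucc i') ^ p
              * ordStat (Fin.snoc y t) (Fin.castSucc j') ^ q) y ∂unifCube n)
          = t ^ (n + p + q) * momF n (i' : ℕ) (j' : ℕ) p q := by
        intro t ht
        have hcongr : ∀ y ∈ {y : Fin n → ℝ | ∀ k, y k ≤ t},
            ordStat (Fin.snoc y t) (Fin.castSucc i') ^ p
              * ordStat (Fin.snoc y t) (Fin.castSucc j') ^ q
            = ordStat y i' ^ p * ordStat y j' ^ q := by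
          intro y hy
          rw [ordStat_snoc y t hy, Fin.snoc_castSucc, Fin.snoc_castSucc]
        rw [Set.indicator_congr hcongr, box_moment i' j' p q ht, ih i' j' hij' p q]
      rw [setIntegral_congr_fun measurableSet_Icc hinner]
      rw [MeasureTheory.integral_mul_const, integral_Icc_pow (n+p+q)]
      have hcs : ((Fin.castSucc i' : Fin (n+1)) : ℕ) = (i' : ℕ) := rfl
      have hcs' : ((Fin.castSucc j' : Fin (n+1)) : ℕ) = (j' : ℕ) := rfl
      rw [hcs, hcs', momF_rec n (i' : ℕ) (j' : ℕ) p q]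
      push_cast
      ring

/-- For `n ≥ 1` and order-statistic indices `i ≤ j` (0-based `i, j : Fin n`
corresponding to the 1-based indices `i+1 ≤ j+1`), with `μ_k = k/(n+1)` (1-based), the
covariance of `(U_(i) − μ_i)²` and `(U_(j) − μ_j)²` under the uniform distribution on
`[0,1]^n` equals
`2μ_i²(1−μ_j)²/((n+2)(n+3)) + (μ_i(1−μ_j)/((n+2)(n+3)))(3(1−3μ_i)(2−3μ_j)/(n+4) − (1−μ_i)μ_j/(n+2))`. -/
theorem covariance_squared_deviations_orderStats
    (n : ℕ) (hn : 1 ≤ n) (i j : Fin n) (hij : i ≤ j) :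
    (∫ x, (ordStat x i - ((i : ℕ) + 1) / ((n : ℝ) + 1)) ^ 2 *
          (ordStat x j - ((j : ℕ) + 1) / ((n : ℝ) + 1)) ^ 2 ∂(unifCube n))
      - (∫ x, (ordStat x i - ((i : ℕ) + 1) / ((n : ℝ) + 1)) ^ 2 ∂(unifCube n)) *
          (∫ x, (ordStat x j - ((j : ℕ) + 1) / ((n : ℝ) + 1)) ^ 2 ∂(unifCube n))
      = 2 * (((i : ℕ) + 1) / ((n : ℝ) + 1)) ^ 2 *
            (1 - ((j : ℕ) + 1) / ((n : ℝ) + 1)) ^ 2 / (((n : ℝ) + 2) * ((n : ℝ) + 3))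
        + ((((i : ℕ) + 1) / ((n : ℝ) + 1)) * (1 - ((j : ℕ) + 1) / ((n : ℝ) + 1)) /
              (((n : ℝ) + 2) * ((n : ℝ) + 3))) *
            (3 * (1 - 3 * (((i : ℕ) + 1) / ((n : ℝ) + 1))) *
                (2 - 3 * (((j : ℕ) + 1) / ((n : ℝ) + 1))) / ((n : ℝ) + 4)
              - (1 - ((i : ℕ) + 1) / ((n : ℝ) + 1)) *
                  (((j : ℕ) + 1) / ((n : ℝ) + 1)) / ((n : ℝ) + 2)) := by
  set a : ℝ := (((i:ℕ):ℝ) + 1) / ((n : ℝ) + 1) with ha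
  set b : ℝ := (((j:ℕ):ℝ) + 1) / ((n : ℝ) + 1) with hb
  set m : ℕ → ℕ → (Fin n → ℝ) → ℝ := fun p q x => ordStat x i ^ p * ordStat x j ^ q with hm
  have hint : ∀ p q : ℕ, Integrable (m p q) (unifCube n) := fun p q => integrable_mono i j p q
  have hval : ∀ p q : ℕ, ∫ x, m p q x ∂unifCube n = momF n (i:ℕ) (j:ℕ) p q :=
    fun p q => moment n i j hij p q
  have Ji0 : Integrable (fun x : Fin n → ℝ => (1:ℝ) * m 2 2 x) (unifCube n) := (hint 2 2).const_mul _
  have Ji1 : Integrable (fun x : Fin n → ℝ => (-2*b) * m 2 1 x) (unifCube n) := (hint 2 1).const_mul _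
  have Ji2 : Integrable (fun x : Fin n → ℝ => (b^2) * m 2 0 x) (unifCube n) := (hint 2 0).const_mul _
  have Ji3 : Integrable (fun x : Fin n → ℝ => (-2*a) * m 1 2 x) (unifCube n) := (hint 1 2).const_mul _
  have Ji4 : Integrable (fun x : Fin n → ℝ => (4*a*b) * m 1 1 x) (unifCube n) := (hint 1 1).const_mul _
  have Ji5 : Integrable (fun x : Fin n → ℝ => (-2*a*b^2) * m 1 0 x) (unifCube n) := (hint 1 0).const_mul _
  have Ji6 : Integrable (fun x : Fin n → ℝ => (a^2) * m 0 2 x) (unifCube n) := (hint 0 2).const_mul _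
  have Ji7 : Integrable (fun x : Fin n → ℝ => (-2*a^2*b) * m 0 1 x) (unifCube n) := (hint 0 1).const_mul _
  have Ji8 : Integrable (fun x : Fin n → ℝ => (a^2*b^2) * m 0 0 x) (unifCube n) := (hint 0 0).const_mul _
  have Jt7 : Integrable (fun x : Fin n → ℝ => (a^2*b^2) * m 0 0 x) (unifCube n) := Ji8
  have Jt6 : Integrable (fun x : Fin n → ℝ => (-2*a^2*b) * m 0 1 x + ((a^2*b^2) * m 0 0 x)) (unifCube n) := Ji7.add Jt7
  have Jt5 : Integrable (fun x : Fin n → ℝ => (a^2) * m 0 2 x + ((-2*a^2*b) * m 0 1 x + ((a^2*b^2) * m 0 0 x))) (unifCube n) := Ji6.add Jt6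
  have Jt4 : Integrable (fun x : Fin n → ℝ => (-2*a*b^2) * m 1 0 x + ((a^2) * m 0 2 x + ((-2*a^2*b) * m 0 1 x + ((a^2*b^2) * m 0 0 x)))) (unifCube n) := Ji5.add Jt5
  have Jt3 : Integrable (fun x : Fin n → ℝ => (4*a*b) * m 1 1 x + ((-2*a*b^2) * m 1 0 x + ((a^2) * m 0 2 x + ((-2*a^2*b) * m 0 1 x + ((a^2*b^2) * m 0 0 x))))) (unifCube n) := Ji4.add Jt4
  have Jt2 : Integrable (fun x : Fin n → ℝ => (-2*a) * m 1 2 x + ((4*a*b) * m 1 1 x + ((-2*a*b^2) * m 1 0 x + ((a^2) * m 0 2 x + ((-2*a^2*b) * m 0 1 x + ((a^2*b^2) * m 0 0 x)))))) (unifCube n) := Ji3.add Jt3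
  have Jt1 : Integrable (fun x : Fin n → ℝ => (b^2) * m 2 0 x + ((-2*a) * m 1 2 x + ((4*a*b) * m 1 1 x + ((-2*a*b^2) * m 1 0 x + ((a^2) * m 0 2 x + ((-2*a^2*b) * m 0 1 x + ((a^2*b^2) * m 0 0 x))))))) (unifCube n) := Ji2.add Jt2
  have Jt0 : Integrable (fun x : Fin n → ℝ => (-2*b) * m 2 1 x + ((b^2) * m 2 0 x + ((-2*a) * m 1 2 x + ((4*a*b) * m 1 1 x + ((-2*a*b^2) * m 1 0 x + ((a^2) * m 0 2 x + ((-2*a^2*b) * m 0 1 x + ((a^2*b^2) * m 0 0 x)))))))) (unifCube n) := Ji1.add Jt1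
  have hJ : (∫ x, (ordStat x i - a) ^ 2 * (ordStat x j - b) ^ 2 ∂unifCube n) = (1:ℝ) * momF n (i:ℕ) (j:ℕ) 2 2 + ((-2*b) * momF n (i:ℕ) (j:ℕ) 2 1 + ((b^2) * momF n (i:ℕ) (j:ℕ) 2 0 + ((-2*a) * momF n (i:ℕ) (j:ℕ) 1 2 + ((4*a*b) * momF n (i:ℕ) (j:ℕ) 1 1 + ((-2*a*b^2) * momF n (i:ℕ) (j:ℕ) 1 0 + ((a^2) * momF n (i:ℕ) (j:ℕ) 0 2 + ((-2*a^2*b) * momF n (i:ℕ) (j:ℕ) 0 1 + ((a^2*b^2) * momF n (i:ℕ) (j:ℕ) 0 0)))))))) := by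
    rw [show (fun x : Fin n → ℝ => (ordStat x i - a) ^ 2 * (ordStat x j - b) ^ 2)
        = (fun x : Fin n → ℝ => (1:ℝ) * m 2 2 x + ((-2*b) * m 2 1 x + ((b^2) * m 2 0 x + ((-2*a) * m 1 2 x + ((4*a*b) * m 1 1 x + ((-2*a*b^2) * m 1 0 x + ((a^2) * m 0 2 x + ((-2*a^2*b) * m 0 1 x + ((a^2*b^2) * m 0 0 x))))))))) from funext (fun x => by simp only [m]; ring)]
    rw [integral_add Ji0 Jt0]
    beta_reduce
    rw [integral_add Ji1 Jt1]
    beta_reduce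
    rw [integral_add Ji2 Jt2]
    beta_reduce
    rw [integral_add Ji3 Jt3]
    beta_reduce
    rw [integral_add Ji4 Jt4]
    beta_reduce
    rw [integral_add Ji5 Jt5]
    beta_reduce
    rw [integral_add Ji6 Jt6]
    beta_reduce
    rw [integral_add Ji7 Jt7]
    beta_reduce
    simp only [MeasureTheory.integral_const_mul, hval]
  have Xi0 : Integrable (fun x : Fin n → ℝ => (1:ℝ) * m 2 0 x) (unifCube n) := (hint 2 0).const_mul _
  have Xi1 : Integrable (fun x : Fin n → ℝ => (-2*a) * m 1 0 x) (unifCube n) := (hint 1 0).const_mul _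
  have Xi2 : Integrable (fun x : Fin n → ℝ => (a^2) * m 0 0 x) (unifCube n) := (hint 0 0).const_mul _
  have Xt1 : Integrable (fun x : Fin n → ℝ => (a^2) * m 0 0 x) (unifCube n) := Xi2
  have Xt0 : Integrable (fun x : Fin n → ℝ => (-2*a) * m 1 0 x + ((a^2) * m 0 0 x)) (unifCube n) := Xi1.add Xt1
  have hX : (∫ x, (ordStat x i - a) ^ 2 ∂unifCube n) = (1:ℝ) * momF n (i:ℕ) (j:ℕ) 2 0 + ((-2*a) * momF n (i:ℕ) (j:ℕ) 1 0 + ((a^2) * momF n (i:ℕ) (j:ℕ) 0 0)) := by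
    rw [show (fun x : Fin n → ℝ => (ordStat x i - a) ^ 2)
        = (fun x : Fin n → ℝ => (1:ℝ) * m 2 0 x + ((-2*a) * m 1 0 x + ((a^2) * m 0 0 x))) from funext (fun x => by simp only [m]; ring)]
    rw [integral_add Xi0 Xt0]
    beta_reduce
    rw [integral_add Xi1 Xt1]
    beta_reduce
    simp only [MeasureTheory.integral_const_mul, hval]
  have Yi0 : Integrable (fun x : Fin n → ℝ => (1:ℝ) * m 0 2 x) (unifCube n) := (hint 0 2).const_mul _
  have Yi1 : Integrable (fun x : Fin n → ℝ => (-2*b) * m 0 1 x) (unifCube n) := (hint 0 1).const_mul _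
  have Yi2 : Integrable (fun x : Fin n → ℝ => (b^2) * m 0 0 x) (unifCube n) := (hint 0 0).const_mul _
  have Yt1 : Integrable (fun x : Fin n → ℝ => (b^2) * m 0 0 x) (unifCube n) := Yi2
  have Yt0 : Integrable (fun x : Fin n → ℝ => (-2*b) * m 0 1 x + ((b^2) * m 0 0 x)) (unifCube n) := Yi1.add Yt1
  have hY : (∫ x, (ordStat x j - b) ^ 2 ∂unifCube n) = (1:ℝ) * momF n (i:ℕ) (j:ℕ) 0 2 + ((-2*b) * momF n (i:ℕ) (j:ℕ) 0 1 + ((b^2) * momF n (i:ℕ) (j:ℕ) 0 0)) := by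
    rw [show (fun x : Fin n → ℝ => (ordStat x j - b) ^ 2)
        = (fun x : Fin n → ℝ => (1:ℝ) * m 0 2 x + ((-2*b) * m 0 1 x + ((b^2) * m 0 0 x))) from funext (fun x => by simp only [m]; ring)]
    rw [integral_add Yi0 Yt0]
    beta_reduce
    rw [integral_add Yi1 Yt1]
    beta_reduce
    simp only [MeasureTheory.integral_const_mul, hval]
  rw [hJ, hX, hY]
  simp only [momF, Finset.prod_range_succ, Finset.prod_range_zero, Finset.prod_range_one]
  rw [ha, hb]
  have h1 : ((n:ℝ)+1) ≠ 0 := by positivity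
  have h2 : ((n:ℝ)+2) ≠ 0 := by positivity
  have h3 : ((n:ℝ)+3) ≠ 0 := by positivity
  have h4 : ((n:ℝ)+4) ≠ 0 := by positivity
  push_cast
  field_simp
  ring
end

section
/- Let c > 0 and define ψ(t) = c / (t²(1−t)²) for t ∈ (0,1). Then for every s ∈ (0,1), both integrals below converge and 2(1−s)² ∫₀^s t² ψ(t) dt + 2s² ∫_s^1 (1−t)² ψ(t) dt = 4c · s(1−s). In particular, the weight function ψ(t) ∝ 1/(t²(1−t)²) solves the continuum-limit Lagrange optimality equation for minimum-variance weights with multiplier λ = c. -/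
open MeasureTheory intervalIntegral

lemma aux_deriv1 (c t : ℝ) (ht : (1:ℝ) - t ≠ 0) :
    HasDerivAt (fun x : ℝ => c / (1 - x)) (c / (1 - t) ^ 2) t := by
  have h : HasDerivAt (fun x : ℝ => 1 - x) (-1) t := by
    simpa using (hasDerivAt_id t).const_sub 1
  have := (h.inv ht).const_mul c
  exact this.congr_deriv (by field_simp)

lemma aux_deriv2 (c t : ℝ) (ht : t ≠ 0) :
    HasDerivAt (fun x : ℝ => -c / x) (c / t ^ 2) t := by
  have := ((hasDerivAt_id t).inv ht).const_mul (-c)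
  exact this.congr_deriv (by simp only [id_eq]; field_simp)

/-- With `ψ(t) = c/(t²(1−t)²)` for `c > 0`, for every `s ∈ (0,1)`
both integrals `∫₀^s t² ψ(t) dt` and `∫_s^1 (1−t)² ψ(t) dt` converge and
`2(1−s)² ∫₀^s t² ψ(t) dt + 2s² ∫_s^1 (1−t)² ψ(t) dt = 4c·s(1−s)`, i.e.
`ψ(t) ∝ 1/(t²(1−t)²)` solves the continuum-limit Lagrange optimality equation for
minimum-variance weights with multiplier `λ = c`. -/
theorem optimal_weight_solves_lagrange_equation
    (c : ℝ) (hc : 0 < c) (s : ℝ) (hs : s ∈ Set.Ioo (0:ℝ) 1) :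
    IntervalIntegrable (fun t : ℝ => t ^ 2 * (c / (t ^ 2 * (1 - t) ^ 2))) volume 0 s ∧
    IntervalIntegrable (fun t : ℝ => (1 - t) ^ 2 * (c / (t ^ 2 * (1 - t) ^ 2))) volume s 1 ∧
    2 * (1 - s) ^ 2 * (∫ t in (0:ℝ)..s, t ^ 2 * (c / (t ^ 2 * (1 - t) ^ 2)))
      + 2 * s ^ 2 * (∫ t in s..(1:ℝ), (1 - t) ^ 2 * (c / (t ^ 2 * (1 - t) ^ 2)))
      = 4 * c * (s * (1 - s)) := by
  obtain ⟨hs0, hs1⟩ := hs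
  -- first integrand equals g1 on Ι 0 s
  set g1 : ℝ → ℝ := fun t => c / (1 - t) ^ 2 with hg1
  set g2 : ℝ → ℝ := fun t => c / t ^ 2 with hg2
  have hcg1 : ContinuousOn g1 (Set.uIcc 0 s) := by
    apply ContinuousOn.div continuousOn_const (by fun_prop)
    intro x hx
    rw [Set.uIcc_of_le hs0.le] at hx
    have : (0:ℝ) < 1 - x := by linarith [hx.2]
    positivity
  have hcg2 : ContinuousOn g2 (Set.uIcc s 1) := by
    apply ContinuousOn.div continuousOn_const (by fun_prop)
    intro x hx
    rw [Set.uIcc_of_le hs1.le] at hx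
    have : (0:ℝ) < x := lt_of_lt_of_le hs0 hx.1
    positivity
  have hig1 : IntervalIntegrable g1 volume 0 s := hcg1.intervalIntegrable
  have hig2 : IntervalIntegrable g2 volume s 1 := hcg2.intervalIntegrable
  have hae1 : g1 =ᵐ[volume.restrict (Set.uIoc 0 s)]
      (fun t : ℝ => t ^ 2 * (c / (t ^ 2 * (1 - t) ^ 2))) := by
    filter_upwards [ae_restrict_mem measurableSet_uIoc] with t ht
    rw [Set.uIoc_of_le hs0.le] at ht
    have ht0 : t ≠ 0 := ne_of_gt ht.1
    have ht1 : (1:ℝ) - t ≠ 0 := by have := ht.2; nlinarith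
    simp only [hg1]
    field_simp
  have hae2 : g2 =ᵐ[volume.restrict (Set.uIoc s 1)]
      (fun t : ℝ => (1 - t) ^ 2 * (c / (t ^ 2 * (1 - t) ^ 2))) := by
    have hne : ∀ᵐ t ∂(volume.restrict (Set.uIoc s 1)), t ≠ (1:ℝ) := by
      refine ae_restrict_of_ae ?_
      rw [ae_iff]
      simpa using Real.volume_singleton (x := (1:ℝ))
    filter_upwards [ae_restrict_mem measurableSet_uIoc, hne] with t ht htne
    rw [Set.uIoc_of_le hs1.le] at ht
    have ht0 : t ≠ 0 := ne_of_gt (hs0.trans ht.1)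
    have ht1 : (1:ℝ) - t ≠ 0 := sub_ne_zero.2 (Ne.symm htne)
    simp only [hg2]
    field_simp
  have hint1 : IntervalIntegrable (fun t : ℝ => t ^ 2 * (c / (t ^ 2 * (1 - t) ^ 2)))
      volume 0 s := hig1.congr_ae hae1
  have hint2 : IntervalIntegrable (fun t : ℝ => (1 - t) ^ 2 * (c / (t ^ 2 * (1 - t) ^ 2)))
      volume s 1 := hig2.congr_ae hae2
  refine ⟨hint1, hint2, ?_⟩
  have h1' : ∀ᵐ x ∂(volume : Measure ℝ), x ∈ Set.uIoc 0 s →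
      g1 x = x ^ 2 * (c / (x ^ 2 * (1 - x) ^ 2)) :=
    (ae_restrict_iff' measurableSet_uIoc).mp hae1
  have h2' : ∀ᵐ x ∂(volume : Measure ℝ), x ∈ Set.uIoc s 1 →
      g2 x = (1 - x) ^ 2 * (c / (x ^ 2 * (1 - x) ^ 2)) :=
    (ae_restrict_iff' measurableSet_uIoc).mp hae2
  have hI1 : (∫ t in (0:ℝ)..s, t ^ 2 * (c / (t ^ 2 * (1 - t) ^ 2)))
      = c / (1 - s) - c := by
    rw [← integral_congr_ae h1']
    have := integral_eq_sub_of_hasDerivAt (f := fun x : ℝ => c / (1 - x))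
      (f' := g1) (a := 0) (b := s)
      (fun t ht => by
        rw [Set.uIcc_of_le hs0.le] at ht
        exact aux_deriv1 c t (by have := ht.2; nlinarith)) hig1
    rw [this]; norm_num
  have hI2 : (∫ t in s..(1:ℝ), (1 - t) ^ 2 * (c / (t ^ 2 * (1 - t) ^ 2)))
      = c / s - c := by
    rw [← integral_congr_ae h2']
    have := integral_eq_sub_of_hasDerivAt (f := fun x : ℝ => -c / x)
      (f' := g2) (a := s) (b := 1)
      (fun t ht => by
        rw [Set.uIcc_of_le hs1.le] at ht
        exact aux_deriv2 c t (ne_of_gt (lt_of_lt_of_le hs0 ht.1))) hig2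
    rw [this]; ring
  rw [hI1, hI2]
  have h1s : (1:ℝ) - s ≠ 0 := by nlinarith
  have hss : s ≠ 0 := ne_of_gt hs0
  field_simp
  ring
end

section
/- Let 0 < ε < 1/2 and let ω > 0 satisfy tan(ω · ln((1−ε)/ε)) = 1/(2ω). Set λ = ω² + 1/4 and f(t) = (t(1−t))^{−1/2} cos(ω · ln(t/(1−t))) for t ∈ [ε, 1−ε]. Then f satisfies the integral eigenvalue equation f(t) = λ ∫_ε^{1−ε} ((min(s,t) − st) / (s(1−s) t(1−t))) f(s) ds for every t ∈ [ε, 1−ε]. -/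
open MeasureTheory intervalIntegral

noncomputable def Lg (s : ℝ) : ℝ := Real.log s - Real.log (1 - s)

noncomputable def Gf (om a b sg : ℝ) (s : ℝ) : ℝ :=
  Real.exp (sg * Lg s) * (a * Real.cos (om * Lg s) + b * Real.sin (om * Lg s))

lemma hasDerivAt_Lg {s : ℝ} (hs : 0 < s) (hs1 : s < 1) :
    HasDerivAt Lg (1 / s + 1 / (1 - s)) s := by
  have h1 : HasDerivAt Real.log s⁻¹ s := Real.hasDerivAt_log hs.ne'
  have hinner : HasDerivAt (fun x : ℝ => 1 - x) (-1) s := by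
    simpa using (hasDerivAt_id s).const_sub 1
  have h2 := (Real.hasDerivAt_log (by linarith : (1:ℝ) - s ≠ 0)).comp s hinner
  have := h1.sub h2
  refine this.congr_deriv (Eq.symm ?_)
  field_simp
  ring

lemma hasDerivAt_Gf (om a b sg : ℝ) {s : ℝ} (hs : 0 < s) (hs1 : s < 1) :
    HasDerivAt (Gf om a b sg)
      (Real.exp (sg * Lg s) *
        ((sg * a + om * b) * Real.cos (om * Lg s) + (sg * b - om * a) * Real.sin (om * Lg s)) *
        (1 / s + 1 / (1 - s))) s := by
  have hL := hasDerivAt_Lg hs hs1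
  have hexp := (hL.const_mul sg).exp
  have hcos := (hL.const_mul om).cos
  have hsin := (hL.const_mul om).sin
  have htot := hexp.mul ((hcos.const_mul a).add (hsin.const_mul b))
  refine htot.congr_deriv (Eq.symm ?_)
  simp only [Pi.add_apply]
  ring

lemma exp_half_Lg {s : ℝ} (hs : 0 < s) (hs1 : s < 1) :
    Real.exp ((1/2) * Lg s) = Real.sqrt s / Real.sqrt (1 - s) := by
  have h1s : (0:ℝ) < 1 - s := by linarith
  have e1 : Real.exp ((1/2) * Real.log s) = Real.sqrt s := by
    rw [show (1/2 : ℝ) * Real.log s = Real.log (Real.sqrt s) by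
      rw [Real.log_sqrt hs.le]; ring]
    exact Real.exp_log (Real.sqrt_pos.mpr hs)
  have e2 : Real.exp ((1/2) * Real.log (1 - s)) = Real.sqrt (1 - s) := by
    rw [show (1/2 : ℝ) * Real.log (1-s) = Real.log (Real.sqrt (1-s)) by
      rw [Real.log_sqrt h1s.le]; ring]
    exact Real.exp_log (Real.sqrt_pos.mpr h1s)
  rw [Lg, mul_sub, Real.exp_sub, e1, e2]

lemma exp_neg_half_Lg {s : ℝ} (hs : 0 < s) (hs1 : s < 1) :
    Real.exp (-(1/2) * Lg s) = Real.sqrt (1 - s) / Real.sqrt s := by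
  rw [show -(1/2) * Lg s = -((1/2) * Lg s) by ring, Real.exp_neg, exp_half_Lg hs hs1]
  rw [inv_div]

lemma exp_half_Lg' {s : ℝ} (hs : 0 < s) (hs1 : s < 1) :
    Real.exp ((1/2) * Lg s) = Real.sqrt (s * (1 - s)) / (1 - s) := by
  rw [exp_half_Lg hs hs1, Real.sqrt_mul hs.le, mul_div_assoc, Real.sqrt_div_self',
    mul_one_div]

lemma exp_neg_half_Lg' {s : ℝ} (hs : 0 < s) (hs1 : s < 1) :
    Real.exp (-(1/2) * Lg s) = Real.sqrt (s * (1 - s)) / s := by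
  rw [exp_neg_half_Lg hs hs1, Real.sqrt_mul hs.le, mul_comm (Real.sqrt s),
    mul_div_assoc, Real.sqrt_div_self', mul_one_div]

/-- Let `0 < ε < 1/2` and let `ω > 0` satisfy
`tan(ω ln((1−ε)/ε)) = 1/(2ω)`. With `λ = ω² + 1/4` and
`f(t) = (t(1−t))^{−1/2} cos(ω ln(t/(1−t)))`, the function `f` satisfies the integral
eigenvalue equation
`f(t) = λ ∫_ε^{1−ε} ((min(s,t) − st)/(s(1−s)t(1−t))) f(s) ds` on `[ε, 1−ε]`. -/
theorem eigenfunction_cosine_type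
    (ε ω : ℝ) (hε : 0 < ε) (hε' : ε < 1 / 2) (hω : 0 < ω)
    (hcond : Real.tan (ω * Real.log ((1 - ε) / ε)) = 1 / (2 * ω)) :
    ∀ t ∈ Set.Icc ε (1 - ε),
      Real.cos (ω * Real.log (t / (1 - t))) / Real.sqrt (t * (1 - t))
        = (ω ^ 2 + 1 / 4) *
            ∫ s in ε..(1 - ε),
              ((min s t - s * t) / (s * (1 - s) * t * (1 - t))) *
                (Real.cos (ω * Real.log (s / (1 - s))) / Real.sqrt (s * (1 - s))) := by
  intro t ht
  obtain ⟨htl, htr⟩ := ht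
  have hε1 : (0:ℝ) < 1 - ε := by linarith
  have ht0 : 0 < t := lt_of_lt_of_le hε htl
  have ht1 : t < 1 := by linarith
  have h1t : (0:ℝ) < 1 - t := by linarith
  set lam : ℝ := ω ^ 2 + 1/4 with hlam
  have hlam0 : 0 < lam := by positivity
  set a := Real.log ((1 - ε) / ε) with ha
  -- key boundary identity from the transcendental condition
  have hkey : (1/2) * Real.cos (ω * a) - ω * Real.sin (ω * a) = 0 := by
    have hpos : (0:ℝ) < 1 / (2 * ω) := by positivity
    have hcosne : Real.cos (ω * a) ≠ 0 := by
      intro h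
      rw [Real.tan_eq_sin_div_cos, h, div_zero] at hcond
      linarith [hcond ▸ hpos]
    rw [Real.tan_eq_sin_div_cos] at hcond
    field_simp at hcond
    linarith [hcond]
  set F : ℝ → ℝ := fun s =>
    ((min s t - s * t) / (s * (1 - s) * t * (1 - t))) *
      (Real.cos (ω * Real.log (s / (1 - s))) / Real.sqrt (s * (1 - s))) with hFdef
  -- continuity
  have hcont : ContinuousOn F (Set.Icc ε (1 - ε)) := by
    have hne : ∀ s ∈ Set.Icc ε (1 - ε), 0 < s ∧ 0 < 1 - s := fun s hs =>
      ⟨lt_of_lt_of_le hε hs.1, by have := hs.2; linarith⟩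
    apply ContinuousOn.mul
    · apply ContinuousOn.div
      · fun_prop
      · fun_prop
      · intro s hs
        obtain ⟨h1, h2⟩ := hne s hs
        positivity
    · apply ContinuousOn.div
      · apply Real.continuous_cos.comp_continuousOn
        apply ContinuousOn.mul continuousOn_const
        apply ContinuousOn.log
        · apply ContinuousOn.div continuousOn_id (by fun_prop)
          intro s hs
          exact (hne s hs).2.ne'
        · intro s hs
          obtain ⟨h1, h2⟩ := hne s hs
          positivity
      · fun_prop
      · intro s hs
        obtain ⟨h1, h2⟩ := hne s hs
        have : 0 < Real.sqrt (s * (1 - s)) := Real.sqrt_pos.mpr (by positivity)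
        exact this.ne'
  have hsub1 : Set.uIcc ε t ⊆ Set.Icc ε (1 - ε) := by
    rw [Set.uIcc_of_le htl]; exact Set.Icc_subset_Icc le_rfl htr
  have hsub2 : Set.uIcc t (1 - ε) ⊆ Set.Icc ε (1 - ε) := by
    rw [Set.uIcc_of_le htr]; exact Set.Icc_subset_Icc htl le_rfl
  have hint1 : IntervalIntegrable F volume ε t := (hcont.mono hsub1).intervalIntegrable
  have hint2 : IntervalIntegrable F volume t (1 - ε) := (hcont.mono hsub2).intervalIntegrable
  have hsplit : (∫ s in ε..t, F s) + (∫ s in t..(1 - ε), F s) = ∫ s in ε..(1 - ε), F s :=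
    intervalIntegral.integral_add_adjacent_intervals hint1 hint2
  -- FTC on [ε, t]
  have hftc1 : (∫ s in ε..t, F s)
      = Gf ω (1/2) ω (1/2) t / (lam * t) - Gf ω (1/2) ω (1/2) ε / (lam * t) := by
    apply intervalIntegral.integral_eq_sub_of_hasDerivAt
      (f := fun s => Gf ω (1/2) ω (1/2) s / (lam * t)) _ hint1
    intro s hs
    rw [Set.uIcc_of_le htl] at hs
    obtain ⟨hs1, hs2⟩ := hs
    have hs0 : 0 < s := lt_of_lt_of_le hε hs1
    have hs1' : s < 1 := by linarith
    have h1s : (0:ℝ) < 1 - s := by linarith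
    have hD := (hasDerivAt_Gf ω (1/2) ω (1/2) hs0 hs1').div_const (lam * t)
    refine hD.congr_deriv (Eq.symm ?_)
    rw [hFdef]
    simp only
    rw [min_eq_left hs2, Real.log_div hs0.ne' h1s.ne', exp_half_Lg' hs0 hs1']
    simp only [Lg]
    set q := Real.sqrt (s * (1 - s)) with hqdef
    set c := Real.cos (ω * (Real.log s - Real.log (1 - s))) with hc
    set c2 := Real.sin (ω * (Real.log s - Real.log (1 - s))) with hc2
    have hq2 : q * q = s * (1 - s) := Real.mul_self_sqrt (by positivity)
    have hq0 : q ≠ 0 := (Real.sqrt_pos.mpr (by positivity)).ne'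
    have hcq : c / q = c * q / (s * (1 - s)) := by
      rw [← hq2]
      field_simp
    rw [hcq]
    field_simp
    ring
  -- FTC on [t, 1-ε]
  have hftc2 : (∫ s in t..(1 - ε), F s)
      = Gf ω (-(1/2)) ω (-(1/2)) (1 - ε) / (lam * (1 - t))
        - Gf ω (-(1/2)) ω (-(1/2)) t / (lam * (1 - t)) := by
    apply intervalIntegral.integral_eq_sub_of_hasDerivAt
      (f := fun s => Gf ω (-(1/2)) ω (-(1/2)) s / (lam * (1 - t))) _ hint2
    intro s hs
    rw [Set.uIcc_of_le htr] at hs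
    obtain ⟨hs1, hs2⟩ := hs
    have hs0 : 0 < s := lt_of_lt_of_le ht0 hs1
    have hs1' : s < 1 := by linarith
    have h1s : (0:ℝ) < 1 - s := by linarith
    have hD := (hasDerivAt_Gf ω (-(1/2)) ω (-(1/2)) hs0 hs1').div_const (lam * (1 - t))
    refine hD.congr_deriv (Eq.symm ?_)
    rw [hFdef]
    simp only
    rw [min_eq_right hs1, Real.log_div hs0.ne' h1s.ne', exp_neg_half_Lg' hs0 hs1']
    simp only [Lg]
    set q := Real.sqrt (s * (1 - s)) with hqdef
    set c := Real.cos (ω * (Real.log s - Real.log (1 - s))) with hc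
    set c2 := Real.sin (ω * (Real.log s - Real.log (1 - s))) with hc2
    have hq2 : q * q = s * (1 - s) := Real.mul_self_sqrt (by positivity)
    have hq0 : q ≠ 0 := (Real.sqrt_pos.mpr (by positivity)).ne'
    have hcq : c / q = c * q / (s * (1 - s)) := by
      rw [← hq2]
      field_simp
    rw [hcq]
    field_simp
    ring
  -- boundary values vanish
  have hLgε : Lg ε = -a := by
    rw [Lg, ha, Real.log_div hε1.ne' hε.ne']; ring
  have hLg1ε : Lg (1 - ε) = a := by
    rw [Lg, ha, Real.log_div hε1.ne' hε.ne']
    norm_num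
  have hG1ε : Gf ω (1/2) ω (1/2) ε = 0 := by
    rw [Gf, hLgε]
    rw [show ω * -a = -(ω * a) by ring, Real.cos_neg, Real.sin_neg]
    have : (1:ℝ)/2 * Real.cos (ω * a) + ω * -Real.sin (ω * a) = 0 := by linarith [hkey]
    rw [this, mul_zero]
  have hG2ε : Gf ω (-(1/2)) ω (-(1/2)) (1 - ε) = 0 := by
    rw [Gf, hLg1ε]
    have : -(1:ℝ)/2 * Real.cos (ω * a) + ω * Real.sin (ω * a) = 0 := by linarith [hkey]
    rw [show (-(1/2) : ℝ) * Real.cos (ω * a) + ω * Real.sin (ω * a)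
        = -(1:ℝ)/2 * Real.cos (ω * a) + ω * Real.sin (ω * a) by ring, this, mul_zero]
  -- assemble
  rw [← hsplit, hftc1, hftc2, hG1ε, hG2ε]
  rw [Gf, Gf, Real.log_div ht0.ne' h1t.ne', exp_half_Lg' ht0 ht1, exp_neg_half_Lg' ht0 ht1]
  simp only [Lg]
  set q := Real.sqrt (t * (1 - t)) with hqdef
  set c := Real.cos (ω * (Real.log t - Real.log (1 - t))) with hc
  set c2 := Real.sin (ω * (Real.log t - Real.log (1 - t))) with hc2
  have hq2 : q * q = t * (1 - t) := Real.mul_self_sqrt (by positivity)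
  have hq0 : q ≠ 0 := (Real.sqrt_pos.mpr (by positivity)).ne'
  have hcq : c / q = c * q / (t * (1 - t)) := by
    rw [← hq2]
    field_simp
  rw [hcq]
  have hlamne : lam ≠ 0 := hlam0.ne'
  field_simp
  ring
end
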